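/- arXiv:1212.1346 — 4 statements merged into one kernel-verified Lean document; each statement's English description precedes it below -/
import Mathlib

section
/- For every m ≥ 1 there exists a polynomial p such that for every nondeterministic finite automaton A with n states over an alphabet Σ of m letters all of whose accepted words are nonunary, the Parikh image ψ(L(A)) can be written as ψ(L(A)) = Y ∪ ⋃_{i ∈ I} Z_i, where Y, I and the linear sets Z_i with offsets v_{i,0} satisfy: Y is finite with all components bounded by p(n), |I| ≤ p(n), each Z_i has at most m generators which are linearly independent vectors from {0,1,…,n}^m and offset components bounded by p(n); and, in addition, for each i ∈ I one can choose a nonunary vector x_i ∈ ℕ^m with x_i ⪯ v_{i,0} componentwise, such that the chosen vectors x_i are pairwise distinct. -/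
/-- The Parikh map `ψ : (Fin m)^* → ℕ^m`, counting for each letter its number of
occurrences in the word. -/
def parikh {m : ℕ} (w : List (Fin m)) : Fin m → ℕ := fun i => w.count i

/-- The Parikh image `ψ(L)` of a language over the alphabet `Fin m`. -/
def parikhImage {m : ℕ} (L : Language (Fin m)) : Set (Fin m → ℕ) :=
  parikh '' L

/-- The linear set in `ℕ^m` with offset `v₀` and generators `vs 1, …, vs k`. -/
def linSet {m k : ℕ} (v₀ : Fin m → ℕ) (vs : Fin k → (Fin m → ℕ)) : Set (Fin m → ℕ) :=
  {x | ∃ c : Fin k → ℕ, x = fun i => v₀ i + ∑ j, c j * vs j i}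

/-- Vectors of `ℕ^m` are linearly independent if, over the integers, any vanishing
linear combination has all coefficients zero. -/
def LinIndepZ {m k : ℕ} (vs : Fin k → (Fin m → ℕ)) : Prop :=
  ∀ c : Fin k → ℤ, (∀ i : Fin m, ∑ j, c j * (vs j i : ℤ) = 0) → ∀ j, c j = 0

/-- A word is unary if all of its letters are equal to one single letter
(the empty word is unary). -/
def IsUnaryWord {α : Type*} (w : List α) : Prop :=
  ∀ c ∈ w, ∀ c' ∈ w, c = c'

/-- A vector of `ℕ^m` is unary if it has at most one nonzero component
(the null vector is unary). -/
def VecUnary {m : ℕ} (v : Fin m → ℕ) : Prop :=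
  ∀ i j : Fin m, v i ≠ 0 → v j ≠ 0 → i = j

set_option maxHeartbeats 1000000

/-- Recursive bound for coefficients of integer relations. -/
def DeltaB : ℕ → ℕ → ℕ
  | 0, _ => 1
  | r+1, N => (r+1) * (N+1) * DeltaB r (2*N^2)

lemma DeltaB_pos (r N : ℕ) : 0 < DeltaB r N := by
  induction r generalizing N with
  | zero => simp [DeltaB]
  | succ r ih =>
    have := ih (2*N^2)
    simp only [DeltaB]
    positivity

lemma DeltaB_mono_N (r : ℕ) : ∀ {N N' : ℕ}, N ≤ N' → DeltaB r N ≤ DeltaB r N' := by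
  induction r with
  | zero => intro N N' _; simp [DeltaB]
  | succ r ih =>
    intro N N' h
    simp only [DeltaB]
    have h2 : 2*N^2 ≤ 2*N'^2 := by nlinarith
    exact Nat.mul_le_mul (Nat.mul_le_mul_left _ (by omega)) (ih h2)

lemma exists_bounded_relation {m : ℕ} : ∀ (r : ℕ) (N : ℕ) (p : Fin r → Fin m → ℤ),
    (∀ j i, |p j i| ≤ (N : ℤ)) →
    (∃ lam : Fin r → ℤ, (∃ j, lam j ≠ 0) ∧ ∀ i, ∑ j, lam j * p j i = 0) →
    ∃ lam : Fin r → ℤ, (∃ j, lam j ≠ 0) ∧ (∀ i, ∑ j, lam j * p j i = 0) ∧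
      ∀ j, |lam j| ≤ (DeltaB r N : ℤ) := by
  intro r
  induction r with
  | zero =>
    rintro N p _ ⟨lam, ⟨j, _⟩, _⟩
    exact j.elim0
  | succ r ih =>
    intro N p hbound ⟨lam, ⟨j₀, hj₀⟩, hrel⟩
    by_cases hp0 : ∀ i, p 0 i = 0
    · refine ⟨Pi.single 0 1, ⟨0, by simp⟩, ?_, ?_⟩
      · intro i
        rw [Fin.sum_univ_succ]
        simp [Pi.single, Function.update, hp0 i,
          fun j : Fin r => (Fin.succ_ne_zero j)]
      · intro j
        by_cases h : j = 0 <;>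
          simp [h, Pi.single, Function.update, DeltaB, Nat.succ_le_of_lt (DeltaB_pos _ _),
            (DeltaB_pos r (2*N^2)).le]
        · calc (1:ℤ) ≤ ((r+1) * (N+1) * DeltaB r (2*N^2) : ℕ) := by
                have := DeltaB_pos r (2*N^2); exact_mod_cast Nat.one_le_iff_ne_zero.2 (by positivity)
            _ = _ := by push_cast; ring
    · push_neg at hp0
      obtain ⟨i₀, ha⟩ := hp0
      set a : ℤ := p 0 i₀ with ha_def
      -- the reduced family
      set q : Fin r → Fin m → ℤ := fun j i => a * p j.succ i - (p j.succ i₀) * p 0 i with hq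
      have hqbound : ∀ j i, |q j i| ≤ ((2*N^2 : ℕ) : ℤ) := by
        intro j i
        have h1 : |a * p j.succ i| ≤ (N:ℤ) * N :=
          (abs_mul _ _).le.trans (mul_le_mul (hbound 0 i₀) (hbound _ i) (abs_nonneg _)
            (by exact_mod_cast N.zero_le))
        have h2 : |(p j.succ i₀) * p 0 i| ≤ (N:ℤ) * N :=
          (abs_mul _ _).le.trans (mul_le_mul (hbound _ i₀) (hbound 0 i) (abs_nonneg _)
            (by exact_mod_cast N.zero_le))
        calc |q j i| ≤ |a * p j.succ i| + |(p j.succ i₀) * p 0 i| := abs_sub _ _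
          _ ≤ (N:ℤ)*N + N*N := add_le_add h1 h2
          _ = ((2*N^2 : ℕ) : ℤ) := by push_cast; ring
      -- tail of lam is a nonzero relation for q
      have hlam0 : ∃ j : Fin r, lam j.succ ≠ 0 := by
        by_contra h
        push_neg at h
        have h0 : lam 0 * p 0 i₀ = 0 := by
          have := hrel i₀
          rwa [Fin.sum_univ_succ, Finset.sum_eq_zero (fun j _ => by rw [h j]; ring),
            add_zero] at this
        have hlam00 : lam 0 = 0 := by
          rcases mul_eq_zero.1 h0 with h' | h'
          · exact h'
          · exact absurd h' ha
        rcases Fin.eq_zero_or_eq_succ j₀ with rfl | ⟨j', rfl⟩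
        · exact hj₀ hlam00
        · exact hj₀ (h j')
      have htailsum : ∀ i, ∑ j : Fin r, lam j.succ * p j.succ i = - (lam 0 * p 0 i) := by
        intro i
        have := hrel i
        rw [Fin.sum_univ_succ] at this
        linarith
      have hqrel : ∀ i, ∑ j : Fin r, lam j.succ * q j i = 0 := by
        intro i
        have expand : ∑ j : Fin r, lam j.succ * q j i
            = a * (∑ j : Fin r, lam j.succ * p j.succ i)
              - (∑ j : Fin r, lam j.succ * p j.succ i₀) * p 0 i := by
          rw [Finset.mul_sum, Finset.sum_mul, ← Finset.sum_sub_distrib]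
          congr 1; ext j; simp only [hq]; ring
        rw [expand, htailsum i, htailsum i₀]
        ring
      obtain ⟨mu, ⟨jm, hjm⟩, hmurel, hmubound⟩ :=
        ih (2*N^2) q hqbound ⟨fun j => lam j.succ, hlam0, hqrel⟩
      -- assemble the relation for p
      refine ⟨Fin.cases (- ∑ j : Fin r, mu j * p j.succ i₀) (fun j => a * mu j), ?_, ?_, ?_⟩
      · exact ⟨jm.succ, by simpa using mul_ne_zero ha hjm⟩
      · intro i
        rw [Fin.sum_univ_succ]
        simp only [Fin.cases_zero, Fin.cases_succ]
        have expand : ∑ j : Fin r, (a * mu j) * p j.succ i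
            = ∑ j : Fin r, mu j * q j i + (∑ j : Fin r, mu j * p j.succ i₀) * p 0 i := by
          rw [Finset.sum_mul, ← Finset.sum_add_distrib]
          congr 1; ext j; simp only [hq]; ring
        rw [expand, hmurel i]
        ring
      · intro j
        have hDcast : ((DeltaB (r+1) N : ℕ) : ℤ) = ((r:ℤ)+1) * ((N:ℤ)+1) * (DeltaB r (2*N^2) : ℤ) := by
          simp only [DeltaB]; push_cast; ring
        have hD := DeltaB_pos r (2*N^2)
        rcases Fin.eq_zero_or_eq_succ j with rfl | ⟨j', rfl⟩
        · simp only [Fin.cases_zero]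
          calc |(- ∑ j : Fin r, mu j * p j.succ i₀)| = |∑ j : Fin r, mu j * p j.succ i₀| := abs_neg _
            _ ≤ ∑ j : Fin r, |mu j * p j.succ i₀| := Finset.abs_sum_le_sum_abs _ _
            _ ≤ ∑ _j : Fin r, (DeltaB r (2*N^2) : ℤ) * N := by
                refine Finset.sum_le_sum fun j _ => ?_
                rw [abs_mul]
                exact mul_le_mul (hmubound j) (hbound _ _) (abs_nonneg _) (by positivity)
            _ = (r : ℤ) * ((DeltaB r (2*N^2) : ℤ) * N) := by simp [mul_comm]
            _ ≤ (DeltaB (r+1) N : ℤ) := by rw [hDcast]; nlinarith [hD, (0:ℤ) ≤ (N:ℤ), Int.ofNat_nonneg N, Int.ofNat_nonneg r, (Int.ofNat_nonneg (DeltaB r (2*N^2)))]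
        · simp only [Fin.cases_succ]
          rw [abs_mul]
          calc |a| * |mu j'| ≤ (N:ℤ) * (DeltaB r (2*N^2) : ℤ) :=
              mul_le_mul (hbound 0 i₀) (hmubound j') (abs_nonneg _) (by exact_mod_cast N.zero_le)
            _ ≤ (DeltaB (r+1) N : ℤ) := by rw [hDcast]; nlinarith [hD, Int.ofNat_nonneg N, Int.ofNat_nonneg r, Int.ofNat_nonneg (DeltaB r (2*N^2))]

lemma DeltaB_mono_r {r r' : ℕ} (h : r ≤ r') (N : ℕ) : DeltaB r N ≤ DeltaB r' N := by
  induction r' with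
  | zero => simp_all
  | succ r' ih =>
    rcases Nat.lt_or_ge r (r'+1) with h' | h'
    · have := ih (by omega)
      calc DeltaB r N ≤ DeltaB r' N := this
        _ ≤ DeltaB r' (2*N^2) := DeltaB_mono_N r' (by nlinarith)
        _ ≤ (r'+1) * (N+1) * DeltaB r' (2*N^2) := Nat.le_mul_of_pos_left _ (by positivity)
        _ = DeltaB (r'+1) N := rfl
    · have : r = r' + 1 := by omega
      simp [this]

/-- No nonzero integer relation supported on `S`. -/
def SuppIndep {m t : ℕ} (P : Fin t → (Fin m → ℕ)) (S : Finset (Fin t)) : Prop :=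
  ∀ lam : Fin t → ℤ, (∀ j ∉ S, lam j = 0) → (∀ i, ∑ j, lam j * (P j i : ℤ) = 0) →
    ∀ j, lam j = 0

lemma suppIndep_card_le {m t : ℕ} {P : Fin t → (Fin m → ℕ)} {S : Finset (Fin t)}
    (h : SuppIndep P S) : S.card ≤ m := by
  classical
  have hLI : LinearIndependent ℤ (fun x : S => (fun i => (P x.1 i : ℤ))) := by
    rw [Fintype.linearIndependent_iff]
    intro g hg x
    set lam : Fin t → ℤ := fun j => if h : j ∈ S then g ⟨j, h⟩ else 0 with hlam
    have hsupp : ∀ j ∉ S, lam j = 0 := fun j hj => by simp [hlam, hj]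
    have hrel : ∀ i, ∑ j, lam j * (P j i : ℤ) = 0 := by
      intro i
      have := congrFun hg i
      simp only [Finset.sum_apply, Pi.smul_apply, smul_eq_mul, Pi.zero_apply] at this
      rw [← this]
      calc ∑ j : Fin t, lam j * (P j i : ℤ)
          = ∑ j ∈ S, lam j * (P j i : ℤ) :=
            (Finset.sum_subset (Finset.subset_univ S)
              (fun j _ hj => by simp [hsupp j hj])).symm
        _ = ∑ x : {x // x ∈ S}, lam x.1 * (P x.1 i : ℤ) :=
            (Finset.sum_coe_sort S (fun j => lam j * (P j i : ℤ))).symm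
        _ = ∑ x : {x // x ∈ S}, g x * (P x.1 i : ℤ) :=
            Finset.sum_congr rfl fun x _ => by simp [hlam, x.2]
    have := h lam hsupp hrel x.1
    simpa [hlam, x.2] using this
  have := hLI.fintype_card_le_finrank
  simpa using this

lemma dep_of_card_gt {m : ℕ} (p : Fin (m+1) → Fin m → ℤ) :
    ∃ lam : Fin (m+1) → ℤ, (∃ j, lam j ≠ 0) ∧ ∀ i, ∑ j, lam j * p j i = 0 := by
  have : ¬ LinearIndependent ℤ p := by
    intro h
    have := h.fintype_card_le_finrank
    simp at this
  rw [Fintype.not_linearIndependent_iff] at this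
  obtain ⟨g, hg, j, hj⟩ := this
  refine ⟨g, ⟨j, hj⟩, fun i => ?_⟩
  have := congrFun hg i
  simpa using this

/-- Key Step B lemma: every representation can be replaced by one whose set of
"large" coefficients indexes a ℤ-independent subfamily. -/
lemma stepB {m t : ℕ} (n : ℕ) (P : Fin t → (Fin m → ℕ)) (hP : ∀ j i, P j i ≤ n)
    (b v : Fin m → ℕ) (hv : ∃ c : Fin t → ℕ, ∀ i, v i = b i + ∑ j, c j * P j i) :
    ∃ c : Fin t → ℕ, (∀ i, v i = b i + ∑ j, c j * P j i) ∧
      SuppIndep P (Finset.univ.filter (fun j => DeltaB (m+1) n ≤ c j)) := by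
  classical
  set R : Set (Lex (Fin t → ℕ)) := {d | ∀ i, v i = b i + ∑ j, (ofLex d) j * P j i} with hR
  obtain ⟨c0, hc0⟩ := hv
  have hne : R.Nonempty := ⟨toLex c0, hc0⟩
  obtain ⟨d, hd, hmin⟩ := (IsWellFounded.wf (r := (· < · : Lex (Fin t → ℕ) → _ → Prop))).has_min R hne
  set c : Fin t → ℕ := ofLex d with hc
  set S : Finset (Fin t) := Finset.univ.filter (fun j => DeltaB (m+1) n ≤ c j) with hS
  refine ⟨c, hd, ?_⟩
  by_contra hdep
  unfold SuppIndep at hdep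
  push_neg at hdep
  obtain ⟨lam, hsupp, hrel, j₀, hj₀⟩ := hdep
  -- produce a *bounded* nonzero relation supported on S
  have key : ∃ lamb : Fin t → ℤ, (∃ j, lamb j ≠ 0) ∧ (∀ j ∉ S, lamb j = 0) ∧
      (∀ i, ∑ j, lamb j * (P j i : ℤ) = 0) ∧ (∀ j, |lamb j| ≤ (DeltaB (m+1) n : ℤ)) := by
    obtain ⟨r, f, hrle, hfinj, hfmem, mu, hmune, hmurel⟩ :
        ∃ (r : ℕ) (f : Fin r → Fin t), r ≤ m+1 ∧ Function.Injective f ∧ (∀ a, f a ∈ S) ∧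
          ∃ mu : Fin r → ℤ, (∃ a, mu a ≠ 0) ∧ ∀ i, ∑ a, mu a * (P (f a) i : ℤ) = 0 := by
      rcases le_or_gt S.card (m+1) with hcard | hcard
      · set e := S.orderIsoOfFin rfl with he
        refine ⟨S.card, fun a => (e a : Fin t), hcard, ?_, fun a => (e a).2,
          fun a => lam (e a : Fin t), ?_, ?_⟩
        · intro a b hab
          exact e.injective (Subtype.ext hab)
        · have hj₀S : j₀ ∈ S := by
            by_contra h
            exact hj₀ (hsupp j₀ h)
          exact ⟨e.symm ⟨j₀, hj₀S⟩, by simpa using hj₀⟩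
        · intro i
          have h1 : ∑ a, lam ((e a : { x // x ∈ S }) : Fin t)
                * (P ((e a : { x // x ∈ S }) : Fin t) i : ℤ)
              = ∑ x : {x // x ∈ S}, lam x.1 * (P x.1 i : ℤ) :=
            Fintype.sum_equiv e.toEquiv _ _ (fun a => rfl)
          rw [h1, Finset.sum_coe_sort S (fun j => lam j * (P j i : ℤ)),
            Finset.sum_subset (Finset.subset_univ S) (fun j _ hj => by simp [hsupp j hj])]
          exact hrel i
      · obtain ⟨S', hsub, hcard'⟩ := S.exists_subset_card_eq (le_of_lt hcard)
        set e := S'.orderIsoOfFin hcard' with he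
        obtain ⟨mu, hmune, hmurel⟩ := dep_of_card_gt
          (fun (a : Fin (m+1)) i => ((P ((e a : { x // x ∈ S' }) : Fin t) i : ℤ)))
        refine ⟨m+1, fun a => (e a : Fin t), le_refl _, ?_, fun a => hsub (e a).2,
          mu, hmune, hmurel⟩
        intro a b hab
        exact e.injective (Subtype.ext hab)
    obtain ⟨mu', hmu'ne, hmu'rel, hmu'bd⟩ := exists_bounded_relation r n
      (fun a i => ((P (f a) i : ℤ)))
      (fun j i => by
        rw [abs_of_nonneg (by positivity)]
        exact_mod_cast hP (f j) i)
      ⟨mu, hmune, hmurel⟩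
    classical
    set lamb : Fin t → ℤ := fun j => ∑ a ∈ Finset.univ.filter (fun a => f a = j), mu' a with hlamb
    have hfiber : ∀ a, lamb (f a) = mu' a := by
      intro a
      have : Finset.univ.filter (fun b => f b = f a) = {a} := by
        ext b
        simp only [Finset.mem_filter, Finset.mem_univ, true_and, Finset.mem_singleton]
        exact ⟨fun h => hfinj h, fun h => by rw [h]⟩
      simp [hlamb, this]
    have hzero : ∀ j, (∀ a, f a ≠ j) → lamb j = 0 := by
      intro j hj
      have : Finset.univ.filter (fun a => f a = j) = ∅ := by
        ext a
        simp [hj a]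
      simp [hlamb, this]
    refine ⟨lamb, ?_, ?_, ?_, ?_⟩
    · obtain ⟨a, ha⟩ := hmu'ne
      exact ⟨f a, by rw [hfiber a]; exact ha⟩
    · intro j hj
      refine hzero j fun a haj => hj ?_
      rw [← haj]
      exact hfmem a
    · intro i
      have : ∑ j, lamb j * (P j i : ℤ)
          = ∑ j, ∑ a ∈ Finset.univ.filter (fun a => f a = j), mu' a * (P (f a) i : ℤ) := by
        refine Finset.sum_congr rfl fun j _ => ?_
        rw [hlamb]
        dsimp only
        rw [Finset.sum_mul]
        refine Finset.sum_congr rfl fun a ha => ?_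
        rw [(Finset.mem_filter.1 ha).2]
      rw [this, Finset.sum_fiberwise_of_maps_to (fun a _ => Finset.mem_univ (f a))
        (fun a => mu' a * (P (f a) i : ℤ))]
      exact hmu'rel i
    · intro j
      by_cases hj : ∃ a, f a = j
      · obtain ⟨a, rfl⟩ := hj
        rw [hfiber a]
        calc |mu' a| ≤ (DeltaB r n : ℤ) := hmu'bd a
          _ ≤ (DeltaB (m+1) n : ℤ) := by exact_mod_cast DeltaB_mono_r hrle n
      · push_neg at hj
        rw [hzero j hj]
        simp [(DeltaB_pos (m+1) n).le]
  obtain ⟨lamb, ⟨ja, hja⟩, hlsupp, hlrel, hlbd⟩ := key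
  -- least index with nonzero coefficient
  set Fz : Finset (Fin t) := Finset.univ.filter (fun j => lamb j ≠ 0) with hFz
  have hFzne : Fz.Nonempty := ⟨ja, by simp [hFz, hja]⟩
  set j₁ := Fz.min' hFzne with hj₁
  have hj₁mem : lamb j₁ ≠ 0 := by
    have := Fz.min'_mem hFzne
    simp only [hFz, Finset.mem_filter] at this
    exact this.2
  have hbefore : ∀ j, j < j₁ → lamb j = 0 := by
    intro j hj
    by_contra h
    have : j₁ ≤ j := Fz.min'_le j (by simp [hFz, h])
    omega
  -- choose the sign so that lam2 j₁ < 0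
  obtain ⟨lam2, h2supp, h2rel, h2bd, h2neg, h2before⟩ :
      ∃ lam2 : Fin t → ℤ, (∀ j ∉ S, lam2 j = 0) ∧ (∀ i, ∑ j, lam2 j * (P j i : ℤ) = 0) ∧
        (∀ j, |lam2 j| ≤ (DeltaB (m+1) n : ℤ)) ∧ lam2 j₁ < 0 ∧ (∀ j, j < j₁ → lam2 j = 0) := by
    rcases lt_or_gt_of_ne hj₁mem with hneg | hpos
    · exact ⟨lamb, hlsupp, hlrel, hlbd, hneg, hbefore⟩
    · refine ⟨-lamb, fun j hj => by simp [hlsupp j hj], fun i => ?_, fun j => by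
        simpa using hlbd j, by simpa using hpos, fun j hj => by simp [hbefore j hj]⟩
      have := hlrel i
      simp only [Pi.neg_apply, neg_mul]
      rw [Finset.sum_neg_distrib, this, neg_zero]
  -- the new, lex-smaller representation
  have hnn : ∀ j, 0 ≤ (c j : ℤ) + lam2 j := by
    intro j
    rcases le_or_gt 0 (lam2 j) with h | h
    · positivity
    · have hjS : j ∈ S := by
        by_contra hjS
        rw [h2supp j hjS] at h
        omega
      have : (DeltaB (m+1) n : ℕ) ≤ c j := by
        simp only [hS, Finset.mem_filter] at hjS
        exact hjS.2
      have hb := h2bd j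
      rw [abs_of_neg h] at hb
      have : ((DeltaB (m+1) n : ℕ) : ℤ) ≤ (c j : ℤ) := by exact_mod_cast this
      omega
  set c'' : Fin t → ℕ := fun j => (↑(c j) + lam2 j).toNat with hc''
  have hc''cast : ∀ j, (c'' j : ℤ) = (c j : ℤ) + lam2 j := fun j => Int.toNat_of_nonneg (hnn j)
  have hc''rep : ∀ i, v i = b i + ∑ j, c'' j * P j i := by
    intro i
    have : ((v i : ℤ)) = (b i : ℤ) + ∑ j, (c'' j : ℤ) * (P j i : ℤ) := by
      have h1 : ∑ j, (c'' j : ℤ) * (P j i : ℤ)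
          = ∑ j, (c j : ℤ) * (P j i : ℤ) + ∑ j, lam2 j * (P j i : ℤ) := by
        rw [← Finset.sum_add_distrib]
        exact Finset.sum_congr rfl fun j _ => by rw [hc''cast j]; ring
      rw [h1, h2rel i, add_zero]
      have := hd i
      exact_mod_cast this
    exact_mod_cast this
  have hmem : toLex c'' ∈ R := hc''rep
  refine hmin (toLex c'') hmem ⟨j₁, fun j hj => ?_, ?_⟩
  · show c'' j = c j
    have h0 : lam2 j = 0 := h2before j hj
    have h1 := hc''cast j
    rw [h0, add_zero] at h1
    exact_mod_cast h1
  · show c'' j₁ < c j₁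
    have h1 := hc''cast j₁
    have h2 : (c'' j₁ : ℤ) < (c j₁ : ℤ) := by omega
    exact_mod_cast h2

variable {m : ℕ} {σ : Type*}

/-- An explicit run of an NFA from `q` to `q'` reading word `w`, with trace `qs`
(the states after each step). -/
inductive NRun (A : NFA (Fin m) σ) : σ → List (Fin m) → List σ → σ → Prop
  | nil (q : σ) : NRun A q [] [] q
  | cons {q : σ} {a : Fin m} {q' : σ} {w : List (Fin m)} {qs : List σ} {q'' : σ}
      (h : q' ∈ A.step q a) (hr : NRun A q' w qs q'') :
      NRun A q (a::w) (q'::qs) q''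

namespace NRun

variable {A : NFA (Fin m) σ}

lemma length_eq {q w qs q'} (h : NRun A q w qs q') : qs.length = w.length := by
  induction h with
  | nil => rfl
  | cons _ _ ih => simpa using ih

lemma append {q w₁ qs₁ p w₂ qs₂ q'} (h₁ : NRun A q w₁ qs₁ p) (h₂ : NRun A p w₂ qs₂ q') :
    NRun A q (w₁ ++ w₂) (qs₁ ++ qs₂) q' := by
  induction h₁ with
  | nil => simpa using h₂
  | cons h _ ih => exact NRun.cons h (ih h₂)

lemma split_at {q w qs q'} (h : NRun A q w qs q') :
    ∀ i, i ≤ w.length →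
      NRun A q (w.take i) (qs.take i) ((q::qs).getD i q) ∧
      NRun A ((q::qs).getD i q) (w.drop i) (qs.drop i) q' := by
  induction h with
  | nil q =>
    intro i hi
    have : i = 0 := by simpa using hi
    subst this
    exact ⟨NRun.nil q, NRun.nil q⟩
  | @cons q a q' w qs q'' h hr ih =>
    intro i hi
    match i with
    | 0 => exact ⟨NRun.nil q, NRun.cons h hr⟩
    | (i'+1) =>
      have hi' : i' ≤ w.length := by simpa using hi
      obtain ⟨h1, h2⟩ := ih i' hi'
      have hlen : i' < (q' :: qs).length := by
        simp [hr.length_eq]; omega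
      have hget : ((q' :: qs).getD i' q) = ((q' :: qs).getD i' q') := by
        rw [List.getD_eq_getElem _ _ hlen, List.getD_eq_getElem _ _ hlen]
      simp only [List.take_succ_cons, List.drop_succ_cons, List.getD_cons_succ, hget]
      exact ⟨NRun.cons h h1, h2⟩
  
lemma mem_split {q w qs q' p} (h : NRun A q w qs q') (hp : p ∈ q :: qs) :
    ∃ w₁ w₂ qs₁ qs₂, w = w₁ ++ w₂ ∧ qs = qs₁ ++ qs₂ ∧
      NRun A q w₁ qs₁ p ∧ NRun A p w₂ qs₂ q' := by
  induction h with
  | nil q =>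
    simp only [List.mem_singleton] at hp
    subst hp
    exact ⟨[], [], [], [], rfl, rfl, NRun.nil p, NRun.nil p⟩
  | @cons q a q' w qs q'' h hr ih =>
    rcases List.mem_cons.1 hp with rfl | hp'
    · exact ⟨[], a::w, [], q'::qs, rfl, rfl, NRun.nil p, NRun.cons h hr⟩
    · obtain ⟨w₁, w₂, qs₁, qs₂, hw, hqs, h1, h2⟩ := ih hp'
      exact ⟨a::w₁, w₂, q'::qs₁, qs₂, by simp [hw], by simp [hqs], NRun.cons h h1, h2⟩

end NRun

lemma mem_evalFrom_iff (A : NFA (Fin m) σ) (w : List (Fin m)) (Q : Set σ) (q' : σ) :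
    q' ∈ A.evalFrom Q w ↔ ∃ q ∈ Q, ∃ qs, NRun A q w qs q' := by
  induction w generalizing Q with
  | nil =>
    simp only [NFA.evalFrom_nil]
    constructor
    · exact fun h => ⟨q', h, [], NRun.nil q'⟩
    · rintro ⟨q, hq, qs, hrun⟩
      cases hrun
      exact hq
  | cons a w ih =>
    rw [show A.evalFrom Q (a::w) = A.evalFrom (A.stepSet Q a) w from rfl, ih]
    constructor
    · rintro ⟨p, hp, qs, hrun⟩
      rw [NFA.mem_stepSet] at hp
      obtain ⟨q, hq, hstep⟩ := hp
      exact ⟨q, hq, p::qs, NRun.cons hstep hrun⟩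
    · rintro ⟨q, hq, qs, hrun⟩
      cases hrun with
      | cons hstep htail =>
        exact ⟨_, NFA.mem_stepSet.2 ⟨q, hq, hstep⟩, _, htail⟩

lemma mem_accepts_iff_run (A : NFA (Fin m) σ) (w : List (Fin m)) :
    w ∈ A.accepts ↔ ∃ q₀ qs qf, q₀ ∈ A.start ∧ qf ∈ A.accept ∧ NRun A q₀ w qs qf := by
  rw [NFA.mem_accepts]
  constructor
  · rintro ⟨qf, hqf, hev⟩
    rw [mem_evalFrom_iff] at hev
    obtain ⟨q₀, hq₀, qs, hrun⟩ := hev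
    exact ⟨q₀, qs, qf, hq₀, hqf, hrun⟩
  · rintro ⟨q₀, qs, qf, hq₀, hqf, hrun⟩
    exact ⟨qf, hqf, (mem_evalFrom_iff A w A.start qf).2 ⟨q₀, hq₀, qs, hrun⟩⟩

lemma parikh_append {m : ℕ} (w₁ w₂ : List (Fin m)) (i : Fin m) :
    parikh (w₁ ++ w₂) i = parikh w₁ i + parikh w₂ i := List.count_append

variable {A : NFA (Fin m) σ}

open List in
/-- Inserting a cycle at a visited state. -/
lemma insert_cycle [DecidableEq σ] {q w qs qf p u us}
    (h : NRun A q w qs qf) (hp : p ∈ q :: qs) (hc : NRun A p u us p) :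
    ∃ w' qs', NRun A q w' qs' qf ∧ (∀ i, parikh w' i = parikh w i + parikh u i) ∧
      (q::qs').toFinset = (q::qs).toFinset ∪ us.toFinset := by
  obtain ⟨w₁, w₂, qs₁, qs₂, rfl, rfl, h1, h2⟩ := h.mem_split hp
  refine ⟨w₁ ++ u ++ w₂, qs₁ ++ us ++ qs₂, (h1.append hc).append h2, ?_, ?_⟩
  · intro i
    simp only [parikh_append]
    ring
  · ext x
    simp only [List.toFinset_cons, List.toFinset_append, Finset.mem_union, Finset.mem_insert]
    tauto

open List in
/-- Extracting a short cycle from a long run, preserving the visited set. -/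
lemma extract_cycle [Fintype σ] [DecidableEq σ] {q : σ} {w : List (Fin m)} {qs : List σ} {qf : σ}
    (h : NRun A q w qs qf) (hlong : Fintype.card σ * Fintype.card σ + Fintype.card σ ≤ w.length) :
    ∃ w' qs' u us p, NRun A q w' qs' qf ∧ NRun A p u us p ∧ u ≠ [] ∧
      u.length ≤ Fintype.card σ ∧ w'.length < w.length ∧
      (q::qs').toFinset = (q::qs).toFinset ∧ us.toFinset ⊆ (q::qs).toFinset ∧
      p ∈ (q::qs).toFinset ∧
      (∀ i, parikh w i = parikh w' i + parikh u i) := by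
  set n := Fintype.card σ with hn
  have hnpos : 0 < n := Fintype.card_pos_iff.2 ⟨q⟩
  have hslen : (q::qs).length = w.length + 1 := by simp [h.length_eq]
  have hVcard : (q::qs).toFinset.card ≤ n := Finset.card_le_univ _
  -- find a window free of first occurrences
  have hwin : ∃ k, k ≤ n ∧ ∀ x ∈ (q::qs),
      ¬ (k*n < (q::qs).idxOf x ∧ (q::qs).idxOf x ≤ k*n + n) := by
    by_contra hcon
    push_neg at hcon
    have hchoice : ∀ k : ℕ, k ≤ n → ∃ ix : ℕ,
        ix ∈ (q::qs).toFinset.image (fun x => (q::qs).idxOf x) ∧ k*n < ix ∧ ix ≤ k*n + n := by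
      intro k hk
      obtain ⟨x, hx, h1, h2⟩ := hcon k hk
      exact ⟨(q::qs).idxOf x, Finset.mem_image.2 ⟨x, List.mem_toFinset.2 hx, rfl⟩, h1, h2⟩
    set g : ℕ → ℕ := fun k => if h : k ≤ n then (hchoice k h).choose else 0 with hg
    have hgspec : ∀ k, ∀ hk : k ≤ n,
        g k ∈ (q::qs).toFinset.image (fun x => (q::qs).idxOf x) ∧ k*n < g k ∧ g k ≤ k*n + n := by
      intro k hk
      simp only [hg, dif_pos hk]
      exact (hchoice k hk).choose_spec
    set F := ((q::qs).toFinset.image (fun x => (q::qs).idxOf x)).erase 0 with hF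
    have hmaps : ∀ k ∈ Finset.range (n+1), g k ∈ F := by
      intro k hk
      rw [Finset.mem_range, Nat.lt_succ_iff] at hk
      obtain ⟨h1, h2, h3⟩ := hgspec k hk
      exact Finset.mem_erase.2 ⟨by omega, h1⟩
    have hFcard : F.card < (Finset.range (n+1)).card := by
      have h0 : 0 ∈ (q::qs).toFinset.image (fun x => (q::qs).idxOf x) :=
        Finset.mem_image.2 ⟨q, by simp, by simp⟩
      have h1 : F.card < ((q::qs).toFinset.image (fun x => (q::qs).idxOf x)).card :=
        Finset.card_erase_lt_of_mem h0
      have h2 : ((q::qs).toFinset.image (fun x => (q::qs).idxOf x)).card ≤ (q::qs).toFinset.card :=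
        Finset.card_image_le
      simp only [Finset.card_range]
      omega
    obtain ⟨k₁, hk₁, k₂, hk₂, hne, heq⟩ :=
      Finset.exists_ne_map_eq_of_card_lt_of_maps_to hFcard hmaps
    rw [Finset.mem_range, Nat.lt_succ_iff] at hk₁ hk₂
    wlog hlt : k₁ < k₂ generalizing k₁ k₂
    · exact this k₂ hk₂ k₁ hk₁ hne.symm heq.symm (by omega)
    obtain ⟨_, hA2, hA3⟩ := hgspec k₁ hk₁
    obtain ⟨_, hB2, hB3⟩ := hgspec k₂ hk₂
    rw [heq] at hA3
    have hstep : k₁ + 1 ≤ k₂ := hlt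
    have : (k₁ + 1) * n ≤ k₂ * n := Nat.mul_le_mul_right n hstep
    have : k₁ * n + n ≤ k₂ * n := by
      calc k₁ * n + n = (k₁ + 1) * n := by ring
        _ ≤ k₂ * n := this
    omega
  obtain ⟨k, hk, hwindow⟩ := hwin
  have han : k * n + n ≤ w.length := by
    have : k * n ≤ n * n := Nat.mul_le_mul_right n hk
    omega
  -- pigeonhole: repeated state within the window
  have hpig : ∃ i i', k*n ≤ i ∧ i < i' ∧ i' ≤ k*n + n ∧
      (q::qs).getD i q = (q::qs).getD i' q := by
    have hmaps : ∀ j ∈ Finset.range (n+1), (q::qs).getD (k*n+j) q ∈ (q::qs).toFinset := by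
      intro j hj
      simp only [Finset.mem_range] at hj
      have hlt : k*n + j < (q::qs).length := by omega
      rw [List.getD_eq_getElem _ _ hlt]
      exact List.mem_toFinset.2 (List.getElem_mem hlt)
    have hcard : (q::qs).toFinset.card < (Finset.range (n+1)).card := by
      simp only [Finset.card_range]; omega
    obtain ⟨j₁, hj₁, j₂, hj₂, hne, heq⟩ :=
      Finset.exists_ne_map_eq_of_card_lt_of_maps_to hcard hmaps
    rw [Finset.mem_range] at hj₁ hj₂
    rcases Nat.lt_or_ge j₁ j₂ with hlt | hge
    · exact ⟨k*n+j₁, k*n+j₂, by omega, by omega, by omega, heq⟩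
    · have hlt : j₂ < j₁ := by omega
      exact ⟨k*n+j₂, k*n+j₁, by omega, by omega, by omega, heq.symm⟩
  obtain ⟨i, i', hai, hii, hi'a, hstate⟩ := hpig
  have hi'w : i' ≤ w.length := by omega
  have hiw : i ≤ w.length := by omega
  have hi's : i' < (q::qs).length := by omega
  have his : i < (q::qs).length := by omega
  have hqslen : qs.length = w.length := h.length_eq
  -- split the run at i and at i'
  obtain ⟨run1, rest⟩ := h.split_at i hiw
  have hdij : i' - i ≤ (w.drop i).length := by
    rw [List.length_drop]; omega
  obtain ⟨run2, run3⟩ := rest.split_at (i'-i) hdij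
  -- identify the midpoint of the second split
  have hmid : (((q::qs).getD i q :: (qs.drop i)).getD (i'-i) ((q::qs).getD i q))
      = (q::qs).getD i q := by
    obtain ⟨d, hd⟩ : ∃ d, i' - i = d + 1 := ⟨i' - i - 1, by omega⟩
    have hdl : (qs.drop i).length = qs.length - i := List.length_drop
    rw [hd, List.getD_cons_succ]
    have hdlt : d < (qs.drop i).length := by omega
    rw [List.getD_eq_getElem _ _ hdlt, List.getElem_drop]
    rw [hstate, List.getD_eq_getElem _ _ hi's]
    have hi'id : i' = (i + d) + 1 := by omega
    subst hi'id
    simp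
  rw [hmid] at run2 run3
  -- assemble
  have hudec : w.drop i = (w.drop i).take (i'-i) ++ w.drop i' := by
    conv_lhs => rw [← List.take_append_drop (i'-i) (w.drop i)]
    rw [List.drop_drop]
    congr 2
    omega
  have hqsdec : (qs.drop i).drop (i'-i) = qs.drop i' := by
    rw [List.drop_drop]
    congr 1
    omega
  have hwdec2 : (w.drop i).drop (i'-i) = w.drop i' := by
    rw [List.drop_drop]
    congr 1
    omega
  rw [hqsdec, hwdec2] at run3
  have hulen : ((w.drop i).take (i'-i)).length = i' - i := by
    rw [List.length_take, List.length_drop]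
    omega
  refine ⟨w.take i ++ w.drop i', qs.take i ++ qs.drop i',
    (w.drop i).take (i'-i), (qs.drop i).take (i'-i), (q::qs).getD i q,
    run1.append run3, run2, ?_, ?_, ?_, ?_, ?_, ?_, ?_⟩
  · intro hne
    rw [hne] at hulen
    simp at hulen
    omega
  · omega
  · have h1 : (w.take i ++ w.drop i').length = i + (w.length - i') := by
      rw [List.length_append, List.length_take, List.length_drop]
      omega
    omega
  · -- visited set preserved
    have hform : q :: (qs.take i ++ qs.drop i') = (q::qs).take (i+1) ++ (q::qs).drop (i'+1) := by
      simp
    ext x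
    constructor
    · intro hx
      rw [List.mem_toFinset, hform] at hx
      rw [List.mem_toFinset]
      rcases List.mem_append.1 hx with hx | hx
      · exact List.mem_of_mem_take hx
      · exact List.mem_of_mem_drop hx
    · intro hx
      rw [List.mem_toFinset] at hx ⊢
      rw [hform]
      have hixlt : (q::qs).idxOf x < (q::qs).length := List.idxOf_lt_length_iff.2 hx
      have hgetix : (q::qs)[(q::qs).idxOf x] = x := List.getElem_idxOf hixlt
      have hnotin := hwindow x hx
      rcases Nat.lt_or_ge (k*n) ((q::qs).idxOf x) with hcase | hcase
      · have hixgt : k*n + n < (q::qs).idxOf x := by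
          by_contra hcon
          exact hnotin ⟨hcase, by omega⟩
        have hd : (q::qs).idxOf x - (i'+1) < ((q::qs).drop (i'+1)).length := by
          rw [List.length_drop]; omega
        refine List.mem_append.2 (Or.inr ?_)
        have hgd : ((q::qs).drop (i'+1))[(q::qs).idxOf x - (i'+1)] = (q::qs)[(q::qs).idxOf x] := by
          rw [List.getElem_drop]
          congr 1
          omega
        rw [← hgetix, ← hgd]
        exact List.getElem_mem hd
      · have hti : (q::qs).idxOf x < ((q::qs).take (i+1)).length := by
          rw [List.length_take]
          omega
        refine List.mem_append.2 (Or.inl ?_)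
        have hgt : ((q::qs).take (i+1))[(q::qs).idxOf x] = (q::qs)[(q::qs).idxOf x] :=
          List.getElem_take
        rw [← hgetix, ← hgt]
        exact List.getElem_mem hti
  · intro x hx
    rw [List.mem_toFinset] at hx
    rw [List.mem_toFinset]
    exact List.mem_cons_of_mem q (List.mem_of_mem_drop (List.mem_of_mem_take hx))
  · rw [List.mem_toFinset, List.getD_eq_getElem _ _ his]
    exact List.getElem_mem his
  · intro ii
    conv_lhs => rw [← List.take_append_drop i w, hudec]
    simp only [parikh_append]
    ring

/-- The set of Parikh vectors of short cycles inside the state set `V`. -/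
def CycSet [Fintype σ] [DecidableEq σ] (A : NFA (Fin m) σ) (V : Finset σ) : Set (Fin m → ℕ) :=
  {c | ∃ p u us, p ∈ V ∧ us.toFinset ⊆ V ∧ NRun A p u us p ∧ u ≠ [] ∧
    u.length ≤ Fintype.card σ ∧ parikh u = c}

lemma pump_down [Fintype σ] [DecidableEq σ] {A : NFA (Fin m) σ} :
    ∀ (w : List (Fin m)) (q : σ) (qs : List σ) (qf : σ), NRun A q w qs qf →
    ∃ (w₀ : List (Fin m)) (qs₀ : List σ) (l : List (Fin m → ℕ)), NRun A q w₀ qs₀ qf ∧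
      w₀.length < Fintype.card σ * Fintype.card σ + Fintype.card σ ∧
      (q::qs₀).toFinset = (q::qs).toFinset ∧
      (∀ c ∈ l, c ∈ CycSet A (q::qs).toFinset) ∧
      (∀ i, parikh w i = parikh w₀ i + (l.map (fun c => c i)).sum) := by
  set n := Fintype.card σ with hn
  have H : ∀ (L : ℕ) (w : List (Fin m)) (q : σ) (qs : List σ) (qf : σ), w.length ≤ L →
      NRun A q w qs qf →
      ∃ (w₀ : List (Fin m)) (qs₀ : List σ) (l : List (Fin m → ℕ)), NRun A q w₀ qs₀ qf ∧
        w₀.length < n * n + n ∧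
        (q::qs₀).toFinset = (q::qs).toFinset ∧
        (∀ c ∈ l, c ∈ CycSet A (q::qs).toFinset) ∧
        (∀ i, parikh w i = parikh w₀ i + (l.map (fun c => c i)).sum) := by
    intro L
    induction L with
    | zero =>
      intro w q qs qf hle h
      have hnpos : 0 < n := Fintype.card_pos_iff.2 ⟨q⟩
      refine ⟨w, qs, [], h, by omega, rfl, by simp, by simp⟩
    | succ L ih =>
      intro w q qs qf hle h
      have hnpos : 0 < n := Fintype.card_pos_iff.2 ⟨q⟩
      by_cases hlong : n * n + n ≤ w.length
      · obtain ⟨w', qs', u, us, p, hrun', hcyc, hune, hulen, hwlen, hvis, husub, hpmem, hcount⟩ :=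
          extract_cycle h hlong
        obtain ⟨w₀, qs₀, l, hrun₀, hlen₀, hvis₀, hcycs, hsum⟩ :=
          ih w' q qs' qf (by omega) hrun'
        refine ⟨w₀, qs₀, (parikh u) :: l, hrun₀, hlen₀, by rw [hvis₀, hvis], ?_, ?_⟩
        · intro c hc
          rcases List.mem_cons.1 hc with rfl | hc
          · exact ⟨p, u, us, hpmem, husub, hcyc, hune, hulen, rfl⟩
          · have := hcycs c hc
            rwa [hvis] at this
        · intro i
          rw [hcount i, hsum i]
          simp only [List.map_cons, List.sum_cons]
          ring
      · exact ⟨w, qs, [], h, by omega, rfl, by simp, by simp⟩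
  intro w q qs qf h
  exact H w.length w q qs qf le_rfl h

lemma pump_up [Fintype σ] [DecidableEq σ] {A : NFA (Fin m) σ} :
    ∀ (l : List (Fin m → ℕ)) {q : σ} {w : List (Fin m)} {qs : List σ} {qf : σ},
      NRun A q w qs qf → (∀ c ∈ l, c ∈ CycSet A (q::qs).toFinset) →
    ∃ w' qs', NRun A q w' qs' qf ∧ (q::qs').toFinset = (q::qs).toFinset ∧
      (∀ i, parikh w' i = parikh w i + (l.map (fun c => c i)).sum) := by
  intro l
  induction l with
  | nil =>
    intro q w qs qf h _
    exact ⟨w, qs, h, rfl, by simp⟩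
  | cons c l ih =>
    intro q w qs qf h hcycs
    obtain ⟨p, u, us, hpmem, husub, hcyc, _, _, hpar⟩ := hcycs c (by simp)
    obtain ⟨w₁, qs₁, hrun₁, hpar₁, hvis₁⟩ :=
      insert_cycle h (List.mem_toFinset.1 hpmem) hcyc
    have hvis : (q::qs₁).toFinset = (q::qs).toFinset := by
      rw [hvis₁, Finset.union_eq_left.2 husub]
    obtain ⟨w', qs', hrun', hvis', hpar'⟩ := ih hrun₁ (by
      rw [hvis]
      intro c' hc'
      exact hcycs c' (List.mem_cons_of_mem c hc'))
    refine ⟨w', qs', hrun', by rw [hvis', hvis], ?_⟩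
    intro i
    rw [hpar' i, hpar₁ i, ← hpar]
    simp only [List.map_cons, List.sum_cons]
    ring

/-- Characterization of the Parikh image of an NFA language. -/
lemma parikh_char [Fintype σ] [DecidableEq σ] (A : NFA (Fin m) σ) (v : Fin m → ℕ) :
    v ∈ parikhImage A.accepts ↔
      ∃ (w₀ : List (Fin m)) (q : σ) (qs : List σ) (qf : σ) (l : List (Fin m → ℕ)),
        q ∈ A.start ∧ qf ∈ A.accept ∧ NRun A q w₀ qs qf ∧
        w₀.length < Fintype.card σ * Fintype.card σ + Fintype.card σ ∧
        (∀ c ∈ l, c ∈ CycSet A (q::qs).toFinset) ∧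
        (∀ i, v i = parikh w₀ i + (l.map (fun c => c i)).sum) := by
  constructor
  · rintro ⟨w, hw, rfl⟩
    replace hw := (mem_accepts_iff_run A w).1 hw
    obtain ⟨q₀, qs, qf, hq₀, hqf, hrun⟩ := hw
    obtain ⟨w₀, qs₀, l, hrun₀, hlen₀, hvis₀, hcycs, hsum⟩ := pump_down w q₀ qs qf hrun
    refine ⟨w₀, q₀, qs₀, qf, l, hq₀, hqf, hrun₀, hlen₀, ?_, hsum⟩
    intro c hc
    rw [hvis₀]
    exact hcycs c hc
  · rintro ⟨w₀, q, qs, qf, l, hq, hqf, hrun, _, hcycs, hsum⟩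
    obtain ⟨w', qs', hrun', _, hpar'⟩ := pump_up l hrun hcycs
    refine ⟨w', (mem_accepts_iff_run A w').2 ⟨q, qs', qf, hq, hqf, hrun'⟩, ?_⟩
    funext i
    rw [hpar' i, ← hsum i]

-- ### small generic lemmas

def vsum {m : ℕ} (v : Fin m → ℕ) : ℕ := ∑ i, v i

lemma comp_le_vsum {m : ℕ} (v : Fin m → ℕ) (j : Fin m) : v j ≤ vsum v :=
  Finset.single_le_sum (fun _ _ => Nat.zero_le _) (Finset.mem_univ j)

lemma vsum_le {m n : ℕ} (v : Fin m → ℕ) (h : ∀ j, v j ≤ n) : vsum v ≤ m * n := by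
  calc vsum v ≤ Finset.univ.card • n := Finset.sum_le_card_nsmul _ _ _ (fun x _ => h x)
    _ = m * n := by simp [mul_comm]

lemma vsum_add {m : ℕ} (v w : Fin m → ℕ) : vsum (fun i => v i + w i) = vsum v + vsum w := by
  simp [vsum, Finset.sum_add_distrib]

lemma vsum_smul {m : ℕ} (d : ℕ) (v : Fin m → ℕ) : vsum (fun i => d * v i) = d * vsum v := by
  simp [vsum, Finset.mul_sum]

lemma vsum_pos_of_ne_zero {m : ℕ} {v : Fin m → ℕ} (h : v ≠ 0) : 1 ≤ vsum v := by
  by_contra hc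
  push_neg at hc
  apply h
  funext j
  have := comp_le_vsum v j
  have : v j = 0 := by omega
  simpa using this

lemma card_le_of_bounded {m B : ℕ} (s : Finset (Fin m → ℕ)) (hs : ∀ v ∈ s, ∀ j, v j ≤ B) :
    s.card ≤ (B+1)^m := by
  classical
  have h := Finset.card_le_card_of_injOn
    (f := fun (v : Fin m → ℕ) => (fun j => (⟨min (v j) B, by omega⟩ : Fin (B+1))))
    (t := Finset.univ)
    (fun a _ => Finset.mem_univ _)
    (by
      intro v hv v' hv' heq
      funext j
      have := congrFun heq j
      simp only [Fin.mk.injEq] at this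
      have h1 := hs v (by simpa using hv) j
      have h2 := hs v' (by simpa using hv') j
      omega)
  calc s.card ≤ Finset.univ.card := h
    _ = (B+1)^m := by simp

-- ### rank of a tuple

noncomputable def rankT (n : ℕ) {m k : ℕ} (T : Fin k → Fin m → ℕ) : ℕ :=
  ((Fintype.equivFin (Fin k → Fin m → Fin (n+1)))
    (fun j i => ⟨min (T j i) n, by omega⟩)).val

lemma rankT_lt (n : ℕ) {m k : ℕ} (T : Fin k → Fin m → ℕ) (hk : k ≤ m) :
    rankT n T < (n+1)^(m*m) := by
  have h := ((Fintype.equivFin (Fin k → Fin m → Fin (n+1)))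
    (fun j i => ⟨min (T j i) n, by omega⟩)).isLt
  have hcard : Fintype.card (Fin k → Fin m → Fin (n+1)) = ((n+1)^m)^k := by
    simp [Fintype.card_fun]
  have h2 : rankT n T < ((n+1)^m)^k := by
    rw [← hcard]
    exact h
  calc rankT n T < ((n+1)^m)^k := h2
    _ = (n+1)^(m*k) := by rw [← pow_mul]
    _ ≤ (n+1)^(m*m) := Nat.pow_le_pow_right (by omega) (Nat.mul_le_mul_left m hk)

lemma rankT_inj (n : ℕ) {m k : ℕ} {T T' : Fin k → Fin m → ℕ}
    (hT : ∀ a b, T a b ≤ n) (hT' : ∀ a b, T' a b ≤ n)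
    (h : rankT n T = rankT n T') : T = T' := by
  have := (Fintype.equivFin (Fin k → Fin m → Fin (n+1))).injective (Fin.val_injective h)
  funext a b
  have := congrFun (congrFun this a) b
  simp only [Fin.mk.injEq] at this
  have h1 := hT a b
  have h2 := hT' a b
  omega

-- ### numerical constants

def NB1 (m n : ℕ) : ℕ := n*n + n + (n+1)^m * DeltaB (m+1) n * n
def NW (m n : ℕ) : ℕ := m * n
def NR (m n : ℕ) : ℕ := (n+1)^(m*m)
def NM (m n k : ℕ) : ℕ := m * NB1 m n + (m - k) * (NR m n * NW m n + NW m n)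
def NPB (m n : ℕ) : ℕ := NM m n 0 + (NM m n 0 + 1)^m

lemma NM_step {m n k : ℕ} (hk : k < m) :
    NM m n (k+1) + (NR m n * NW m n + NW m n) = NM m n k := by
  unfold NM
  have h1 : m - k = (m - (k+1)) + 1 := by omega
  rw [h1, Nat.succ_mul]
  ring

lemma NM_mono {m n : ℕ} {k k' : ℕ} (h : k' ≤ k) : NM m n k ≤ NM m n k' := by
  unfold NM
  have h1 : m - k ≤ m - k' := by omega
  have := Nat.mul_le_mul_right (NR m n * NW m n + NW m n) h1
  omega

lemma rank_window_le {m n k : ℕ} (hk1 : 1 ≤ k) (hkm : k ≤ m) {ρ : ℕ} (hρ : ρ < NR m n) :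
    NM m n k + ρ * NW m n + NW m n ≤ NM m n (k-1) := by
  have h1 : ρ * NW m n + NW m n ≤ NR m n * NW m n + NW m n := by
    have : ρ * NW m n ≤ NR m n * NW m n := Nat.mul_le_mul_right _ (by omega)
    omega
  have h2 := NM_step (m := m) (n := n) (k := k-1) (by omega)
  have h3 : k - 1 + 1 = k := by omega
  rw [h3] at h2
  omega

-- ### the family of good linear pieces

/-- A good piece of the decomposition: bounded independent tuple, contained in the image,
with offset total lying in the window of the tuple's rank. -/
def Good (m n : ℕ) (Img : Set (Fin m → ℕ)) (v₀ : Fin m → ℕ) (k : ℕ)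
    (T : Fin k → Fin m → ℕ) : Prop :=
  1 ≤ k ∧ k ≤ m ∧ (∀ a b, T a b ≤ n) ∧ LinIndepZ T ∧
  linSet v₀ T ⊆ Img ∧
  NM m n k + rankT n T * NW m n ≤ vsum v₀ ∧
  vsum v₀ < NM m n k + rankT n T * NW m n + NW m n

lemma self_mem_linSet {m k : ℕ} (v₀ : Fin m → ℕ) (T : Fin k → Fin m → ℕ) :
    v₀ ∈ linSet v₀ T :=
  ⟨0, by funext i; simp⟩

lemma good_comp_le {m n : ℕ} {Img : Set (Fin m → ℕ)} {v₀ : Fin m → ℕ} {k : ℕ}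
    {T : Fin k → Fin m → ℕ} (h : Good m n Img v₀ k T) (j : Fin m) : v₀ j ≤ NM m n 0 := by
  obtain ⟨hk1, hkm, hTb, _, _, hw1, hw2⟩ := h
  have h1 := comp_le_vsum v₀ j
  have h2 := rank_window_le hk1 hkm (rankT_lt n T hkm)
  have h3 := NM_mono (m := m) (n := n) (k := k-1) (k' := 0) (Nat.zero_le _)
  omega

lemma linIndepZ_tail {m k : ℕ} {T : Fin (k+1) → Fin m → ℕ} (h : LinIndepZ T) :
    LinIndepZ (fun j => T j.succ) := by
  intro c hc j
  have h0 : ∀ i : Fin m, ∑ j : Fin (k+1), (Fin.cons 0 c : Fin (k+1) → ℤ) j * (T j i : ℤ) = 0 := by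
    intro i
    rw [Fin.sum_univ_succ]
    simp only [Fin.cons_zero, Fin.cons_succ, zero_mul, zero_add]
    exact hc i
  have := h (Fin.cons 0 c) h0 j.succ
  simpa using this

lemma linIndepZ_ne_zero {m k : ℕ} {T : Fin k → Fin m → ℕ} (h : LinIndepZ T) (a : Fin k) :
    T a ≠ 0 := by
  intro ha
  classical
  have h0 : ∀ i : Fin m, ∑ j : Fin k, (fun j => if j = a then (1:ℤ) else 0) j * (T j i : ℤ) = 0 := by
    intro i
    rw [Finset.sum_eq_single a]
    · simp [congrFun ha i]
    · intro b _ hb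
      simp [hb]
    · intro hb
      exact absurd (Finset.mem_univ a) hb
  have := h (fun j => if j = a then (1:ℤ) else 0) h0 a
  simp at this

/-- The key covering recursion: every element of a good-but-unpositioned linear set is
either small or lies in a `Good` piece. -/
lemma cover (m n : ℕ) (Img : Set (Fin m → ℕ)) :
    ∀ (k : ℕ) (T : Fin k → Fin m → ℕ) (v₀ : Fin m → ℕ), k ≤ m → (∀ a b, T a b ≤ n) →
      LinIndepZ T → linSet v₀ T ⊆ Img → vsum v₀ ≤ NM m n k →
      ∀ c : Fin k → ℕ,
        (∀ j, (fun i => v₀ i + ∑ j', c j' * T j' i) j ≤ NM m n 0) ∨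
        ∃ (u : Fin m → ℕ) (k' : ℕ) (T' : Fin k' → Fin m → ℕ),
          Good m n Img u k' T' ∧ (fun i => v₀ i + ∑ j', c j' * T j' i) ∈ linSet u T' := by
  intro k
  induction k with
  | zero =>
    intro T v₀ _ _ _ _ hvs c
    left
    intro j
    simp only [Finset.univ_eq_empty, Finset.sum_empty, add_zero]
    have := comp_le_vsum v₀ j
    have := NM_mono (m := m) (n := n) (k := 0) (k' := 0) (le_refl _)
    have h0 := NM_mono (m := m) (n := n) (k := 0) (Nat.zero_le 0)
    have := NM_mono (m := m) (n := n) (Nat.zero_le 0)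
    omega
  | succ k ih =>
    intro T v₀ hkm hTb hTind hsub hvs c
    classical
    set g : Fin m → ℕ := T 0 with hg
    have hgne : g ≠ 0 := linIndepZ_ne_zero hTind 0
    have hgs1 : 1 ≤ vsum g := vsum_pos_of_ne_zero hgne
    have hgsW : vsum g ≤ NW m n := by
      unfold NW; exact vsum_le g (fun b => hTb 0 b)
    have hρlt : rankT n T < NR m n := rankT_lt n T hkm
    have hexists : ∃ d, NM m n (k+1) + rankT n T * NW m n ≤ vsum v₀ + d * vsum g := by
      refine ⟨NM m n (k+1) + rankT n T * NW m n, ?_⟩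
      calc NM m n (k+1) + rankT n T * NW m n
          ≤ (NM m n (k+1) + rankT n T * NW m n) * vsum g :=
            Nat.le_mul_of_pos_right _ (by omega)
        _ ≤ vsum v₀ + (NM m n (k+1) + rankT n T * NW m n) * vsum g := Nat.le_add_left _ _
    set d := Nat.find hexists with hd
    have hdP : NM m n (k+1) + rankT n T * NW m n ≤ vsum v₀ + d * vsum g := Nat.find_spec hexists
    have hdmin : ∀ e, e < d → vsum v₀ + e * vsum g < NM m n (k+1) + rankT n T * NW m n := by
      intro e he
      have := Nat.find_min hexists he
      omega
    rcases le_or_gt d (c 0) with hc0 | hc0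
    · -- the piece with offset shifted by d * g
      right
      set u : Fin m → ℕ := fun i => v₀ i + d * g i with hu
      have husub : linSet u T ⊆ Img := by
        intro x hx
        apply hsub
        obtain ⟨e, he⟩ := hx
        refine ⟨fun j => e j + (if j = 0 then d else 0), ?_⟩
        rw [he]
        funext i
        have hsplit : ∑ j' : Fin (k+1), (e j' + if j' = 0 then d else 0) * T j' i
            = (∑ j' : Fin (k+1), e j' * T j' i) + d * T 0 i := by
          have hterm : ∀ j' : Fin (k+1), (e j' + if j' = 0 then d else 0) * T j' i
              = e j' * T j' i + (if j' = 0 then d * T j' i else 0) := by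
            intro j'
            by_cases hj : j' = 0 <;> simp [hj] <;> ring
          rw [Finset.sum_congr rfl (fun j' _ => hterm j'), Finset.sum_add_distrib]
          congr 1
          rw [Finset.sum_ite_eq' Finset.univ (0 : Fin (k+1)) (fun j' => d * T j' i)]
          simp
        simp only [hu, hsplit, hg]
        ring
      have huvs : vsum u = vsum v₀ + d * vsum g := by
        rw [hu, vsum_add, vsum_smul]
      refine ⟨u, k+1, T, ⟨by omega, hkm, hTb, hTind, husub, ?_, ?_⟩, ?_⟩
      · rw [huvs]; exact hdP
      · rw [huvs]
        rcases Nat.eq_zero_or_pos d with hd0 | hdpos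
        · rw [hd0]
          simp only [Nat.zero_mul, add_zero]
          have e1 : NM m n (k+1) ≤ NM m n (k+1) + rankT n T * NW m n := Nat.le_add_right _ _
          omega
        · have h5 := hdmin (d-1) (by omega)
          have hiter : d * vsum g = (d-1) * vsum g + vsum g := by
            have hh : d = (d-1)+1 := by omega
            calc d * vsum g = ((d-1)+1) * vsum g := by rw [← hh]
              _ = (d-1) * vsum g + vsum g := by ring
          omega
      · refine ⟨Fin.cons (c 0 - d) (fun j => c j.succ), ?_⟩
        funext i
        simp only [hu, hg]
        rw [Fin.sum_univ_succ (f := fun j' => c j' * T j' i),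
          Fin.sum_univ_succ
            (f := fun j' => (Fin.cons (c 0 - d) (fun j => c j.succ) : Fin (k+1) → ℕ) j' * T j' i)]
        simp only [Fin.cons_zero, Fin.cons_succ]
        have hcd : c 0 = (c 0 - d) + d := by omega
        calc v₀ i + (c 0 * T 0 i + ∑ j : Fin k, c j.succ * T j.succ i)
            = v₀ i + (((c 0 - d) + d) * T 0 i + ∑ j : Fin k, c j.succ * T j.succ i) := by
              rw [← hcd]
          _ = v₀ i + d * T 0 i + ((c 0 - d) * T 0 i + ∑ j : Fin k, c j.succ * T j.succ i) := by
              ring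
    · -- recurse with the tail tuple
      set u : Fin m → ℕ := fun i => v₀ i + c 0 * g i with hu
      set T' : Fin k → Fin m → ℕ := fun j => T j.succ with hT'
      have husub : linSet u T' ⊆ Img := by
        intro x hx
        apply hsub
        obtain ⟨e, he⟩ := hx
        refine ⟨Fin.cons (c 0) e, ?_⟩
        rw [he]
        funext i
        simp only [hu, hT', hg]
        rw [Fin.sum_univ_succ (f := fun j' => (Fin.cons (c 0) e : Fin (k+1) → ℕ) j' * T j' i)]
        simp only [Fin.cons_zero, Fin.cons_succ]
        ring
      have huvs : vsum u ≤ NM m n k := by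
        rw [hu, vsum_add, vsum_smul]
        have h1 : c 0 * vsum g ≤ (d-1) * vsum g :=
          Nat.mul_le_mul_right _ (by omega)
        have h2 := hdmin (d-1) (by omega)
        have h3 : rankT n T * NW m n ≤ NR m n * NW m n :=
          Nat.mul_le_mul_right _ (by omega)
        have h4 := NM_step (m := m) (n := n) (k := k) (by omega)
        omega
      have hres := ih T' u (by omega) (fun a b => hTb a.succ b) (linIndepZ_tail hTind)
        husub huvs (fun j => c j.succ)
      have hval : (fun i => u i + ∑ j', c j'.succ * T' j' i)
          = (fun i => v₀ i + ∑ j', c j' * T j' i) := by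
        funext i
        simp only [hu, hT', hg]
        rw [Fin.sum_univ_succ (f := fun j' => c j' * T j' i)]
        ring
      rw [hval] at hres
      exact hres

/-- Two good pieces with the same offset have the same tuple. -/
lemma good_unique {m n : ℕ} {Img : Set (Fin m → ℕ)} {u : Fin m → ℕ} {k k' : ℕ}
    {T : Fin k → Fin m → ℕ} {T' : Fin k' → Fin m → ℕ} (hW : 1 ≤ NW m n)
    (h1 : Good m n Img u k T) (h2 : Good m n Img u k' T') :
    linSet u T ⊆ linSet u T' := by
  obtain ⟨hk1, hkm, hTb, hTi, hsub, hw1, hw2⟩ := h1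
  obtain ⟨hk1', hkm', hTb', hTi', hsub', hw1', hw2'⟩ := h2
  have hρ := rankT_lt n T hkm
  have hρ' := rankT_lt n T' hkm'
  -- first, k = k'
  have hkk : k = k' := by
    by_contra hne
    rcases Nat.lt_or_ge k k' with hlt | hge
    · -- k < k' : NM k ≥ NM (k'-1) ≥ window end of k'
      have ha := rank_window_le hk1' hkm' hρ'
      have hb := NM_mono (m := m) (n := n) (k := k'-1) (k' := k) (by omega)
      omega
    · have hlt : k' < k := by omega
      have ha := rank_window_le hk1 hkm hρ
      have hb := NM_mono (m := m) (n := n) (k := k-1) (k' := k') (by omega)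
      omega
  subst hkk
  -- next, equal ranks
  have hρρ : rankT n T = rankT n T' := by
    by_contra hne
    rcases Nat.lt_or_ge (rankT n T) (rankT n T') with hlt | hge
    · have : (rankT n T + 1) * NW m n ≤ rankT n T' * NW m n :=
        Nat.mul_le_mul_right _ (by omega)
      nlinarith
    · have hlt : rankT n T' < rankT n T := by omega
      have : (rankT n T' + 1) * NW m n ≤ rankT n T * NW m n :=
        Nat.mul_le_mul_right _ (by omega)
      nlinarith
  have := rankT_inj n hTb hTb' hρρ
  rw [this]

open Polynomial in
noncomputable def DeltaPoly : ℕ → Polynomial ℕ → Polynomial ℕ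
  | 0, _ => 1
  | r+1, q => (C (r+1)) * (q + 1) * DeltaPoly r (2*q^2)

lemma DeltaPoly_zero (q : Polynomial ℕ) : DeltaPoly 0 q = 1 := rfl
open Polynomial in
lemma DeltaPoly_succ (r : ℕ) (q : Polynomial ℕ) :
    DeltaPoly (r+1) q = (C (r+1)) * (q + 1) * DeltaPoly r (2*q^2) := rfl
lemma DeltaB_zero (N : ℕ) : DeltaB 0 N = 1 := rfl
lemma DeltaB_succ (r N : ℕ) : DeltaB (r+1) N = (r+1) * (N+1) * DeltaB r (2*N^2) := rfl

open Polynomial in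
lemma DeltaPoly_eval (r : ℕ) : ∀ (q : Polynomial ℕ) (n : ℕ),
    (DeltaPoly r q).eval n = DeltaB r (q.eval n) := by
  induction r with
  | zero => intro q n; rw [DeltaPoly_zero, DeltaB_zero, eval_one]
  | succ r ih =>
    intro q n
    rw [DeltaPoly_succ, DeltaB_succ, eval_mul, eval_mul, eval_add, eval_one, eval_C, ih (2*q^2)]
    congr 1
    simp [eval_pow]

open Polynomial in
noncomputable def M0Poly (m : ℕ) : Polynomial ℕ :=
  C m * (X*X + X + (X+1)^m * DeltaPoly (m+1) X * X) + C m * ((X+1)^(m*m) * (C m * X) + C m * X)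

noncomputable def PPoly (m : ℕ) : Polynomial ℕ := M0Poly m + (M0Poly m + 1)^m

open Polynomial in
lemma M0Poly_eval (m n : ℕ) : (M0Poly m).eval n = NM m n 0 := by
  simp only [M0Poly, eval_add, eval_mul, eval_pow, eval_C, eval_X, eval_one, DeltaPoly_eval]
  simp only [NM, NB1, NR, NW, Nat.sub_zero]

open Polynomial in
lemma PPoly_eval (m n : ℕ) : (PPoly m).eval n = NPB m n := by
  simp only [PPoly, eval_add, eval_pow, eval_one, M0Poly_eval, NPB]

-- nonunary transfer
lemma parikh_nonunary {m : ℕ} {w : List (Fin m)} (h : ¬ IsUnaryWord w) :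
    ¬ VecUnary (parikh w) := by
  unfold IsUnaryWord at h
  push_neg at h
  obtain ⟨c, hc, c', hc', hne⟩ := h
  intro hV
  have h1 : parikh w c ≠ 0 := by
    have := List.count_pos_iff.2 hc
    simp only [parikh]
    omega
  have h2 : parikh w c' ≠ 0 := by
    have := List.count_pos_iff.2 hc'
    simp only [parikh]
    omega
  exact hne (hV c c' h1 h2)

section conv
variable {m t : ℕ} (P : Fin t → (Fin m → ℕ))

lemma list_to_coeff : ∀ (l : List (Fin m → ℕ)), (∀ c ∈ l, ∃ j, c = P j) →
    ∃ d : Fin t → ℕ, ∀ i, (l.map (fun c => c i)).sum = ∑ j, d j * P j i := by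
  classical
  intro l
  induction l with
  | nil => exact fun _ => ⟨0, by simp⟩
  | cons c l ih =>
    intro hc
    obtain ⟨d, hd⟩ := ih (fun c' hc' => hc c' (List.mem_cons_of_mem c hc'))
    obtain ⟨j₀, rfl⟩ := hc _ (List.mem_cons_self)
    refine ⟨fun j => d j + (if j = j₀ then 1 else 0), fun i => ?_⟩
    have hsplit : ∑ j, (d j + if j = j₀ then 1 else 0) * P j i
        = (∑ j, d j * P j i) + P j₀ i := by
      have hterm : ∀ j : Fin t, (d j + if j = j₀ then 1 else 0) * P j i
          = d j * P j i + (if j = j₀ then P j i else 0) := by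
        intro j
        by_cases hj : j = j₀ <;> simp [hj] <;> ring
      rw [Finset.sum_congr rfl (fun j _ => hterm j), Finset.sum_add_distrib]
      congr 1
      rw [Finset.sum_ite_eq' Finset.univ j₀ (fun j => P j i)]
      simp
    simp only [List.map_cons, List.sum_cons, hsplit, hd i]
    ring

lemma coeff_to_list : ∀ (N : ℕ) (d : Fin t → ℕ), (∑ j, d j) ≤ N →
    ∃ l : List (Fin m → ℕ), (∀ c ∈ l, ∃ j, c = P j) ∧
      ∀ i, (l.map (fun c => c i)).sum = ∑ j, d j * P j i := by
  classical
  intro N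
  induction N with
  | zero =>
    intro d hd
    have hz : ∀ j, d j = 0 := by
      intro j
      have := Finset.single_le_sum (f := d) (fun _ _ => Nat.zero_le _) (Finset.mem_univ j)
      omega
    refine ⟨[], by simp, fun i => ?_⟩
    simp [hz]
  | succ N ih =>
    intro d hd
    by_cases hz : ∀ j, d j = 0
    · refine ⟨[], by simp, fun i => ?_⟩
      simp [hz]
    · push_neg at hz
      obtain ⟨j₀, hj₀⟩ := hz
      set d' := Function.update d j₀ (d j₀ - 1) with hd'
      have e3 : ∑ j ∈ Finset.univ.erase j₀, d' j = ∑ j ∈ Finset.univ.erase j₀, d j :=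
        Finset.sum_congr rfl fun j hj => by
          rw [hd', Function.update_of_ne (Finset.mem_erase.1 hj).1]
      have hsum' : (∑ j, d' j) + 1 = ∑ j, d j := by
        rw [← Finset.add_sum_erase _ d' (Finset.mem_univ j₀),
          ← Finset.add_sum_erase _ d (Finset.mem_univ j₀), e3]
        have e4 : d' j₀ = d j₀ - 1 := by rw [hd', Function.update_self]
        omega
      obtain ⟨l, hl, hlsum⟩ := ih d' (by omega)
      refine ⟨P j₀ :: l, ?_, fun i => ?_⟩
      · intro c hc
        rcases List.mem_cons.1 hc with rfl | hc
        · exact ⟨j₀, rfl⟩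
        · exact hl c hc
      · simp only [List.map_cons, List.sum_cons, hlsum i]
        have h1 : ∑ j, d' j * P j i = (d j₀ - 1) * P j₀ i + ∑ j ∈ Finset.univ.erase j₀, d j * P j i := by
          rw [← Finset.add_sum_erase _ (fun j => d' j * P j i) (Finset.mem_univ j₀)]
          congr 1
          · rw [hd', Function.update_self]
          · refine Finset.sum_congr rfl fun j hj => ?_
            rw [hd', Function.update_of_ne (Finset.mem_erase.1 hj).1]
        have h2 : ∑ j, d j * P j i = d j₀ * P j₀ i + ∑ j ∈ Finset.univ.erase j₀, d j * P j i :=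
          (Finset.add_sum_erase _ _ (Finset.mem_univ j₀)).symm
        have h3 : P j₀ i + (d j₀ - 1) * P j₀ i = d j₀ * P j₀ i := by
          have hh : d j₀ = (d j₀ - 1) + 1 := by omega
          calc P j₀ i + (d j₀ - 1) * P j₀ i = ((d j₀ - 1) + 1) * P j₀ i := by ring
            _ = d j₀ * P j₀ i := by rw [← hh]
        rw [h1, h2]
        omega

end conv

lemma sum_over_subset {t : ℕ} {R : Type*} [NonAssocSemiring R]
    (g : Fin t → R) (S : Finset (Fin t)) (f : Fin S.card → R) :
    ∑ a, f a * g ((S.equivFin.symm a) : Fin t)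
      = ∑ j, (if h : j ∈ S then f (S.equivFin ⟨j, h⟩) else 0) * g j := by
  classical
  rw [← Finset.sum_subset (Finset.subset_univ S)
    (f := fun j => (if h : j ∈ S then f (S.equivFin ⟨j, h⟩) else 0) * g j)
    (fun j _ hj => by simp [hj])]
  rw [← Finset.sum_coe_sort S (fun j => (if h : j ∈ S then f (S.equivFin ⟨j, h⟩) else 0) * g j)]
  rw [← Equiv.sum_comp S.equivFin.symm
    (fun x => (if h : (x : Fin t) ∈ S then f (S.equivFin ⟨x, h⟩) else 0) * g (x : Fin t))]
  refine Finset.sum_congr rfl fun a _ => ?_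
  have hmem : ((S.equivFin.symm a : {x // x ∈ S}) : Fin t) ∈ S := (S.equivFin.symm a).2
  rw [dif_pos hmem]
  congr 2
  have : (⟨((S.equivFin.symm a : {x // x ∈ S}) : Fin t), hmem⟩ : {x // x ∈ S}) = S.equivFin.symm a :=
    Subtype.ext rfl
  rw [this, Equiv.apply_symm_apply]

lemma suppIndep_linIndepZ {m t : ℕ} {P : Fin t → (Fin m → ℕ)} {S : Finset (Fin t)}
    (h : SuppIndep P S) :
    LinIndepZ (fun a : Fin S.card => P ((S.equivFin.symm a) : Fin t)) := by
  classical
  intro lam hrel a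
  set lam2 : Fin t → ℤ := fun j => if h : j ∈ S then lam (S.equivFin ⟨j, h⟩) else 0 with hlam2
  have hsupp : ∀ j ∉ S, lam2 j = 0 := fun j hj => by simp [hlam2, hj]
  have hrel2 : ∀ i, ∑ j, lam2 j * (P j i : ℤ) = 0 := by
    intro i
    rw [← sum_over_subset (fun j => (P j i : ℤ)) S (fun a => lam a)]
    exact hrel i
  have hz := h lam2 hsupp hrel2 ((S.equivFin.symm a) : Fin t)
  rw [hlam2] at hz
  simp only [(S.equivFin.symm a).2, dif_pos] at hz
  rwa [show (⟨((S.equivFin.symm a : {x // x ∈ S}) : Fin t), (S.equivFin.symm a).2⟩ : {x // x ∈ S})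
      = S.equivFin.symm a from Subtype.ext rfl, Equiv.apply_symm_apply] at hz


lemma cover' (m n : ℕ) (Img : Set (Fin m → ℕ)) {k : ℕ} {T : Fin k → Fin m → ℕ}
    {v₀ : Fin m → ℕ} (hkm : k ≤ m) (hTb : ∀ a b, T a b ≤ n) (hTi : LinIndepZ T)
    (hsub : linSet v₀ T ⊆ Img) (hvs : vsum v₀ ≤ NM m n k) {x : Fin m → ℕ}
    (c : Fin k → ℕ) (hx : ∀ i, x i = v₀ i + ∑ j', c j' * T j' i) :
    (∀ j, x j ≤ NM m n 0) ∨
      ∃ (u : Fin m → ℕ) (k' : ℕ) (T' : Fin k' → Fin m → ℕ),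
        Good m n Img u k' T' ∧ x ∈ linSet u T' := by
  have h := cover m n Img k T v₀ hkm hTb hTi hsub hvs c
  have hxx : x = fun i => v₀ i + ∑ j', c j' * T j' i := funext hx
  rw [← hxx] at h
  exact h

/-- Like the semilinear representation of Statement 7, but for NFAs all
of whose accepted words are nonunary: in addition, for each `i ∈ I` one can choose a
nonunary vector `x_i ⪯ v_{i,0}` (componentwise) such that the vectors `x_i` are pairwise
distinct. -/
theorem nfa_parikh_semilinear_representation_nonunary (m : ℕ) (hm : 1 ≤ m) :
    ∃ p : Polynomial ℕ,
      ∀ (σ : Type) [Fintype σ], ∀ n : ℕ, Fintype.card σ = n →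
      ∀ A : NFA (Fin m) σ, (∀ w ∈ A.accepts, ¬ IsUnaryWord w) →
      ∃ (Y : Set (Fin m → ℕ)) (I : Finset ℕ) (k : ℕ → ℕ)
        (v₀ : ℕ → (Fin m → ℕ)) (vs : (i : ℕ) → Fin (k i) → (Fin m → ℕ))
        (x : ℕ → (Fin m → ℕ)),
        Y.Finite ∧
        (∀ y ∈ Y, ∀ j, y j ≤ p.eval n) ∧
        I.card ≤ p.eval n ∧
        (∀ i ∈ I,
          k i ≤ m ∧
          (∀ j, v₀ i j ≤ p.eval n) ∧
          (∀ a b, vs i a b ≤ n) ∧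
          LinIndepZ (vs i)) ∧
        (∀ i ∈ I, ¬ VecUnary (x i) ∧ ∀ j, x i j ≤ v₀ i j) ∧
        (∀ i ∈ I, ∀ i' ∈ I, x i = x i' → i = i') ∧
        parikhImage A.accepts = Y ∪ ⋃ i ∈ I, linSet (v₀ i) (vs i) := by
  classical
  refine ⟨PPoly m, ?_⟩
  intro σ _ n hcard A hnon
  subst hcard
  set n := Fintype.card σ with hn
  set Img : Set (Fin m → ℕ) := parikhImage A.accepts with hImg
  have hImgN : ∀ v ∈ Img, ¬ VecUnary v := by
    rintro v ⟨w, hw, rfl⟩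
    exact parikh_nonunary (hnon w hw)
  set Y : Set (Fin m → ℕ) := Img ∩ {v | ∀ j, v j ≤ NM m n 0} with hY
  have hYfin : Y.Finite := by
    refine Set.Finite.subset (Set.finite_Icc (0 : Fin m → ℕ) (fun _ => NM m n 0)) ?_
    rintro v ⟨_, hv⟩
    exact Set.mem_Icc.2 ⟨fun j => Nat.zero_le _, fun j => hv j⟩
  set GS : Set (Fin m → ℕ) := {u | ∃ (k : ℕ) (T : Fin k → Fin m → ℕ), Good m n Img u k T}
    with hGS
  have hGSsub : ∀ u ∈ GS, ∀ j, u j ≤ NM m n 0 := by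
    rintro u ⟨k, T, hgood⟩ j
    exact good_comp_le hgood j
  have hGSfin : GS.Finite := by
    refine Set.Finite.subset (Set.finite_Icc (0 : Fin m → ℕ) (fun _ => NM m n 0)) ?_
    intro u hu
    exact Set.mem_Icc.2 ⟨fun j => Nat.zero_le _, fun j => hGSsub u hu j⟩
  set GF : Finset (Fin m → ℕ) := hGSfin.toFinset with hGF
  set I : Finset ℕ := GF.image (fun u => Encodable.encode u) with hI
  set dec : ℕ → (Fin m → ℕ) := fun i => ((Encodable.decode i : Option (Fin m → ℕ)).getD 0)
    with hdecdef
  have hdec : ∀ u : Fin m → ℕ, dec (Encodable.encode u) = u := by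
    intro u
    show (Encodable.decode (Encodable.encode u) : Option (Fin m → ℕ)).getD 0 = u
    rw [Encodable.encodek]
    rfl
  obtain ⟨D, hDgood⟩ : ∃ D : (Fin m → ℕ) → (Σ k : ℕ, Fin k → (Fin m → ℕ)),
      ∀ u, u ∈ GS → Good m n Img u (D u).1 (D u).2 := by
    refine ⟨fun u =>
      if h : ∃ (k : ℕ) (T : Fin k → Fin m → ℕ), Good m n Img u k T
      then ⟨h.choose, h.choose_spec.choose⟩ else ⟨0, fun _ => 0⟩, ?_⟩
    intro u hu
    have h : ∃ (k : ℕ) (T : Fin k → Fin m → ℕ), Good m n Img u k T := hu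
    dsimp only
    rw [dif_pos h]
    exact h.choose_spec.choose_spec
  have hIdec : ∀ i ∈ I, dec i ∈ GS ∧ Encodable.encode (dec i) = i := by
    intro i hi
    obtain ⟨u, hu, rfl⟩ := Finset.mem_image.1 hi
    rw [hdec u]
    exact ⟨(Set.Finite.mem_toFinset hGSfin).1 hu, rfl⟩
  refine ⟨Y, I, fun i => (D (dec i)).1, fun i => dec i, fun i => (D (dec i)).2,
    fun i => dec i, hYfin, ?_, ?_, ?_, ?_, ?_, ?_⟩
  · rintro y ⟨_, hy⟩ j
    rw [PPoly_eval]
    exact le_trans (hy j) (Nat.le_add_right _ _)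
  · rw [PPoly_eval]
    calc I.card ≤ GF.card := Finset.card_image_le
      _ ≤ (NM m n 0 + 1)^m := card_le_of_bounded GF
          (fun v hv j => hGSsub v ((Set.Finite.mem_toFinset hGSfin).1 hv) j)
      _ ≤ NPB m n := Nat.le_add_left _ _
  · intro i hi
    obtain ⟨hmem, _⟩ := hIdec i hi
    obtain ⟨hk1, hkm, hTb, hTi, hsub, _, _⟩ := hDgood (dec i) hmem
    refine ⟨hkm, ?_, hTb, hTi⟩
    intro j
    rw [PPoly_eval]
    exact le_trans (hGSsub _ hmem j) (Nat.le_add_right _ _)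
  · intro i hi
    obtain ⟨hmem, _⟩ := hIdec i hi
    obtain ⟨_, _, _, _, hsub, _, _⟩ := hDgood (dec i) hmem
    exact ⟨hImgN _ (hsub (self_mem_linSet _ _)), fun j => le_refl _⟩
  · intro i hi i' hi' hxy
    obtain ⟨_, he⟩ := hIdec i hi
    obtain ⟨_, he'⟩ := hIdec i' hi'
    rw [← he, ← he']
    exact congrArg _ hxy
  · apply Set.Subset.antisymm
    · -- main coverage direction
      intro v hv
      have hvImg : v ∈ Img := hv
      rw [hImg] at hv
      rw [parikh_char] at hv
      obtain ⟨w₀, q, qs, qf, l, hq, hqf, hrun, hlen, hcycs, hsum⟩ := hv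
      have hn1 : 1 ≤ n := by
        rw [hn]
        exact Fintype.card_pos_iff.2 ⟨q⟩
      rw [← hn] at hlen
      have hCfin : (CycSet A ((q::qs).toFinset)).Finite := by
        refine Set.Finite.subset (Set.finite_Icc (0 : Fin m → ℕ) (fun _ => n)) ?_
        rintro c ⟨p, u, us, hp, hus, hcyc, hune, hul, rfl⟩
        refine Set.mem_Icc.2 ⟨fun i => Nat.zero_le _, fun i => ?_⟩
        calc parikh u i ≤ u.length := List.count_le_length
          _ ≤ n := by rw [hn]; exact hul
      set CycF : Finset (Fin m → ℕ) := hCfin.toFinset with hCycF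
      set t : ℕ := CycF.card with htdef
      set P : Fin t → (Fin m → ℕ) :=
        fun j => ((CycF.equivFin.symm j : {x // x ∈ CycF}) : Fin m → ℕ) with hP
      have hPmem : ∀ j, (P j) ∈ CycSet A ((q::qs).toFinset) :=
        fun j => (hCfin.mem_toFinset).1 (CycF.equivFin.symm j).2
      have hPb : ∀ j i', P j i' ≤ n := by
        intro j i'
        obtain ⟨p, u, us, hp, hus, hcyc, hune, hul, hpar⟩ := hPmem j
        calc P j i' = parikh u i' := by rw [hpar]
          _ ≤ u.length := List.count_le_length
          _ ≤ n := by rw [hn]; exact hul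
      have hsurj : ∀ c ∈ CycSet A ((q::qs).toFinset), ∃ j, c = P j := by
        intro c hc
        refine ⟨CycF.equivFin ⟨c, hCfin.mem_toFinset.2 hc⟩, ?_⟩
        simp [hP]
      have ht : t ≤ (n+1)^m := card_le_of_bounded CycF (fun c hc j => by
        obtain ⟨p, u, us, hp, hus, hcyc, hune, hul, hpar⟩ := (hCfin.mem_toFinset).1 hc
        calc c j = parikh u j := by rw [hpar]
          _ ≤ u.length := List.count_le_length
          _ ≤ n := by rw [hn]; exact hul)
      -- closure under arbitrary cycle combinations
      have hcombo : ∀ d : Fin t → ℕ,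
          (fun i => parikh w₀ i + ∑ j, d j * P j i) ∈ Img := by
        intro d
        obtain ⟨l', hl', hl'sum⟩ := coeff_to_list P (∑ j, d j) d le_rfl
        rw [hImg]
        rw [parikh_char]
        refine ⟨w₀, q, qs, qf, l', hq, hqf, hrun, by rw [← hn]; exact hlen, ?_, ?_⟩
        · intro c hc
          obtain ⟨j, rfl⟩ := hl' c hc
          exact hPmem j
        · intro i
          rw [hl'sum i]
      -- initial linear representation from the pumping characterization
      obtain ⟨dv, hdv⟩ := list_to_coeff P l (fun c hc => hsurj c (hcycs c hc))
      obtain ⟨c, hcrep, hSind⟩ := stepB n P hPb (parikh w₀) v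
        ⟨dv, fun i => by rw [hsum i, hdv i]⟩
      set S : Finset (Fin t) := Finset.univ.filter (fun j => DeltaB (m+1) n ≤ c j) with hS
      set k₀ : ℕ := S.card with hk₀
      set T₀ : Fin k₀ → (Fin m → ℕ) := fun a => P ((S.equivFin.symm a) : Fin t) with hT₀
      have hk₀m : k₀ ≤ m := suppIndep_card_le hSind
      have hT₀b : ∀ a b, T₀ a b ≤ n := fun a b => hPb _ b
      have hT₀i : LinIndepZ T₀ := suppIndep_linIndepZ hSind
      set csmall : Fin t → ℕ := fun j => if j ∈ S then 0 else c j with hcsmall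
      set v₀i : Fin m → ℕ := fun i => parikh w₀ i + ∑ j, csmall j * P j i with hv₀i
      have hsplit : ∀ (f : Fin k₀ → ℕ) (i : Fin m),
          v₀i i + ∑ a, f a * T₀ a i
            = parikh w₀ i + ∑ j, (csmall j +
                (if h : j ∈ S then f (S.equivFin ⟨j, h⟩) else 0)) * P j i := by
        intro f i
        have hterm : ∀ j, (csmall j + (if h : j ∈ S then f (S.equivFin ⟨j, h⟩) else 0)) * P j i
            = csmall j * P j i + (if h : j ∈ S then f (S.equivFin ⟨j, h⟩) else 0) * P j i :=
          fun j => by ring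
        rw [Finset.sum_congr rfl (fun j _ => hterm j), Finset.sum_add_distrib,
          ← sum_over_subset (fun j => P j i) S f]
        simp only [hv₀i, hT₀]
        ring
      have hv₀sub : linSet v₀i T₀ ⊆ Img := by
        rintro x ⟨f, rfl⟩
        have hkey := hcombo (fun j => csmall j +
          (if h : j ∈ S then f (S.equivFin ⟨j, h⟩) else 0))
        rw [show (fun i => v₀i i + ∑ a, f a * T₀ a i)
            = (fun i => parikh w₀ i + ∑ j, (csmall j +
                (if h : j ∈ S then f (S.equivFin ⟨j, h⟩) else 0)) * P j i)
          from funext (hsplit f)]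
        exact hkey
      have hvx : ∀ i, v i = v₀i i + ∑ a, c ((S.equivFin.symm a) : Fin t) * T₀ a i := by
        intro i
        rw [hsplit (fun a => c ((S.equivFin.symm a) : Fin t)) i, hcrep i]
        congr 1
        refine Finset.sum_congr rfl fun j _ => ?_
        by_cases hj : j ∈ S
        · simp [hcsmall, hj, Equiv.symm_apply_apply]
        · simp [hcsmall, hj]
      have hvsv₀ : vsum v₀i ≤ NM m n k₀ := by
        have hcomp : ∀ i, v₀i i ≤ NB1 m n := by
          intro i
          have h1 : parikh w₀ i ≤ n*n + n := by
            have := List.count_le_length (a := i) (l := w₀)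
            simp only [parikh]
            omega
          have hstep : ∀ j : Fin t, csmall j * P j i ≤ DeltaB (m+1) n * n := by
            intro j
            have hc1 : csmall j ≤ DeltaB (m+1) n := by
              by_cases hj : j ∈ S
              · simp [hcsmall, hj]
              · have hnot : ¬ DeltaB (m+1) n ≤ c j := fun hle => hj (by simp [hS, hle])
                have hcs : csmall j = c j := by simp [hcsmall, hj]
                rw [hcs]
                omega
            exact Nat.mul_le_mul hc1 (hPb j i)
          have h2 : ∑ j, csmall j * P j i ≤ t * (DeltaB (m+1) n * n) := by
            have hss := Finset.sum_le_sum (s := Finset.univ) (fun j _ => hstep j)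
            have hconst : (∑ _j : Fin t, DeltaB (m+1) n * n) = t * (DeltaB (m+1) n * n) := by
              simp [Finset.sum_const, Finset.card_univ, mul_comm]
            rw [← hconst]
            exact hss
          have h3 : t * (DeltaB (m+1) n * n) ≤ (n+1)^m * (DeltaB (m+1) n * n) :=
            Nat.mul_le_mul_right _ ht
          have h4 : (n+1)^m * (DeltaB (m+1) n * n) = (n+1)^m * DeltaB (m+1) n * n :=
            (mul_assoc _ _ _).symm
          simp only [hv₀i]
          unfold NB1
          omega
        calc vsum v₀i ≤ m * NB1 m n := vsum_le v₀i hcomp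
          _ = NM m n m := by simp [NM]
          _ ≤ NM m n k₀ := NM_mono hk₀m
      have hcov := cover' m n Img hk₀m hT₀b hT₀i hv₀sub hvsv₀
        (fun a => c ((S.equivFin.symm a) : Fin t)) hvx
      rcases hcov with hsmall | ⟨u, k', T', hgood, hvin⟩
      · exact Or.inl ⟨hvImg, hsmall⟩
      · right
        have huGS : u ∈ GS := ⟨k', T', hgood⟩
        rw [Set.mem_iUnion₂]
        refine ⟨Encodable.encode u,
          Finset.mem_image.2 ⟨u, hGSfin.mem_toFinset.2 huGS, rfl⟩, ?_⟩
        have hW1 : 1 ≤ NW m n := by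
          unfold NW
          exact Nat.one_le_iff_ne_zero.2 (Nat.mul_ne_zero (by omega) (by omega))
        have hsubset := good_unique hW1 hgood (hDgood u huGS)
        show v ∈ linSet (dec (Encodable.encode u)) ((D (dec (Encodable.encode u))).2)
        rw [hdec u]
        exact hsubset hvin
    · rintro v (hvY | hvU)
      · exact hvY.1
      · rw [Set.mem_iUnion₂] at hvU
        obtain ⟨i, hi, hvm⟩ := hvU
        obtain ⟨hmem, _⟩ := hIdec i hi
        obtain ⟨_, _, _, _, hsub, _, _⟩ := hDgood (dec i) hmem
        exact hsub hvm
end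

section
/- There exists a constant c > 0 such that for infinitely many n there is a nondeterministic finite automaton with n states over a one-letter alphabet such that every deterministic finite automaton accepting a language Parikh equivalent to its language has at least e^{c·√(n·ln n)} states; consequently, the upper bound e^{O(√(n·ln n))} for converting n-state NFAs into Parikh equivalent DFAs is tight. -/
namespace Stmt11
open Filter Finset

def primesS (x : ℕ) : Finset ℕ := (Finset.range (x+1)).filter Nat.Prime

def kk (x : ℕ) : ℕ := (primesS x).card
def nn (x : ℕ) : ℕ := ∑ p ∈ primesS x, p
def PP (x : ℕ) : ℕ := ∏ p ∈ primesS x, p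

lemma mem_primesS {x p : ℕ} : p ∈ primesS x ↔ p.Prime ∧ p ≤ x := by
  simp [primesS, Finset.mem_filter, Finset.mem_range, Nat.lt_succ_iff, and_comm]

lemma primesS_mono {y x : ℕ} (h : y ≤ x) : primesS y ⊆ primesS x := by
  intro p hp; rw [mem_primesS] at *; exact ⟨hp.1, hp.2.trans h⟩

lemma kk_mono {y x : ℕ} (h : y ≤ x) : kk y ≤ kk x :=
  Finset.card_le_card (primesS_mono h)

lemma kk_le (y : ℕ) : kk y ≤ y := by
  have : primesS y ⊆ Finset.Ico 2 (y+1) := by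
    intro p hp; rw [mem_primesS] at hp
    rw [Finset.mem_Ico]; exact ⟨hp.1.two_le, by omega⟩
  calc kk y ≤ (Finset.Ico 2 (y+1)).card := Finset.card_le_card this
    _ ≤ y := by rw [Nat.card_Ico]; omega

lemma PP_pos (x : ℕ) : 0 < PP x :=
  Finset.prod_pos fun p hp => (mem_primesS.1 hp).1.pos

lemma PP_le_4_pow (x : ℕ) : PP x ≤ 4 ^ x := primorial_le_4_pow x

lemma nn_le (x : ℕ) : nn x ≤ x * kk x := by
  calc nn x ≤ ∑ _p ∈ primesS x, x :=
        Finset.sum_le_sum fun p hp => (mem_primesS.1 hp).2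
    _ = (primesS x).card * x := by rw [Finset.sum_const, smul_eq_mul]
    _ = x * kk x := by rw [kk]; ring

lemma nn_pos {x : ℕ} (hx : 2 ≤ x) : 2 ≤ nn x := by
  have h2 : 2 ∈ primesS x := mem_primesS.2 ⟨Nat.prime_two, hx⟩
  exact Finset.single_le_sum (f := fun p => p) (fun p _ => Nat.zero_le p) h2

lemma L3 {x : ℕ} (hx : 2 ≤ x) : 4 ^ (x / 2) ≤ (x + 1) * x ^ kk x := by
  set N := x / 2 with hN
  have hN1 : 1 ≤ N := by omega
  have h1 : 4 ^ N ≤ (2*N+1) * (2*N).choose N :=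
    Nat.four_pow_le_two_mul_add_one_mul_central_binom N
  have hprod : (∏ p ∈ Finset.range (2*N+1), p ^ ((2*N).choose N).factorization p)
      = (2*N).choose N := Nat.prod_pow_factorization_centralBinom N
  have h2 : (2*N).choose N ≤ x ^ kk x := by
    rw [← hprod]
    have heq : (∏ p ∈ Finset.range (2*N+1), p ^ ((2*N).choose N).factorization p)
        = ∏ p ∈ (Finset.range (2*N+1)).filter Nat.Prime,
            p ^ ((2*N).choose N).factorization p := by
      refine (Finset.prod_subset (Finset.filter_subset _ _) ?_).symm
      intro p _ hp
      have : ¬ p.Prime := by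
        intro hpp; exact hp (Finset.mem_filter.2 ⟨by assumption, hpp⟩)
      rw [Nat.factorization_eq_zero_of_not_prime _ this, pow_zero]
    rw [heq]
    have hsub : (Finset.range (2*N+1)).filter Nat.Prime ⊆ primesS x := by
      intro p hp
      rw [Finset.mem_filter, Finset.mem_range] at hp
      exact mem_primesS.2 ⟨hp.2, by omega⟩
    calc ∏ p ∈ (Finset.range (2*N+1)).filter Nat.Prime,
            p ^ ((2*N).choose N).factorization p
        ≤ ∏ _p ∈ (Finset.range (2*N+1)).filter Nat.Prime, x := by
          refine Finset.prod_le_prod' fun p _ => ?_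
          calc p ^ ((2*N).choose N).factorization p ≤ 2*N :=
                Nat.pow_factorization_choose_le (by omega)
            _ ≤ x := by omega
      _ = x ^ ((Finset.range (2*N+1)).filter Nat.Prime).card := Finset.prod_const x
      _ ≤ x ^ kk x := Nat.pow_le_pow_right (by omega) (Finset.card_le_card hsub)
  calc 4 ^ N ≤ (2*N+1) * (2*N).choose N := h1
    _ ≤ (x+1) * x ^ kk x := Nat.mul_le_mul (by omega) h2

lemma L4 {x : ℕ} (hx : 1 ≤ x) :
    (Nat.sqrt x) ^ (kk x - kk (Nat.sqrt x)) ≤ PP x := by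
  set s := Nat.sqrt x with hs
  have hs1 : 1 ≤ s := by
    rw [hs, Nat.le_sqrt]; omega
  set T := (primesS x).filter (fun p => s < p) with hT
  have h1 : kk x - kk s ≤ T.card := by
    have hsub : (primesS x).filter (fun p => ¬ s < p) ⊆ primesS s := by
      intro p hp
      rw [Finset.mem_filter] at hp
      exact mem_primesS.2 ⟨(mem_primesS.1 hp.1).1, by omega⟩
    have hcard := Finset.card_filter_add_card_filter_not
      (s := primesS x) (p := fun p => s < p)
    have h2 := Finset.card_le_card hsub
    have h3 : (Finset.filter (fun p => s < p) (primesS x)).card = T.card := by rw [hT]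
    unfold kk
    omega
  calc s ^ (kk x - kk s) ≤ s ^ T.card := Nat.pow_le_pow_right hs1 h1
    _ ≤ ∏ p ∈ T, p := Finset.pow_card_le_prod T _ s
        (fun p hp => le_of_lt (Finset.mem_filter.1 hp).2)
    _ ≤ PP x := Finset.prod_le_prod_of_subset_of_one_le' (Finset.filter_subset _ _)
        (fun p hp _ => (mem_primesS.1 hp).1.one_lt.le)

lemma ev_log (ε : ℝ) (hε : 0 < ε) : ∀ᶠ x : ℕ in atTop, Real.log (x+1) ≤ ε * x := by
  have h1 : ∀ᶠ y : ℝ in atTop, ‖Real.log y‖ ≤ (ε/2) * ‖y‖ :=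
    Real.isLittleO_log_id_atTop.bound (by positivity)
  have ht : Tendsto (fun x : ℕ => (x:ℝ)+1) atTop atTop :=
    tendsto_atTop_add_const_right _ _ tendsto_natCast_atTop_atTop
  filter_upwards [ht.eventually h1, eventually_ge_atTop 1] with x hx hx1
  have hx0 : (1:ℝ) ≤ (x:ℝ) := by exact_mod_cast hx1
  rw [Real.norm_eq_abs, Real.norm_eq_abs, abs_of_nonneg (by linarith : (0:ℝ) ≤ (x:ℝ)+1)] at hx
  have h2 := (le_abs_self (Real.log ((x:ℝ)+1))).trans hx
  nlinarith

lemma ev_log_sqrt (ε : ℝ) (hε : 0 < ε) :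
    ∀ᶠ x : ℕ in atTop, Real.log x ≤ ε * Real.sqrt x := by
  have h1 : ∀ᶠ y : ℝ in atTop, ‖Real.log y‖ ≤ ε * ‖y ^ (1/2 : ℝ)‖ :=
    (isLittleO_log_rpow_atTop (by norm_num : (0:ℝ) < 1/2)).bound hε
  filter_upwards [tendsto_natCast_atTop_atTop.eventually h1] with x hx
  rw [← Real.sqrt_eq_rpow, Real.norm_eq_abs, Real.norm_eq_abs,
    abs_of_nonneg (Real.sqrt_nonneg _)] at hx
  exact (le_abs_self _).trans hx

lemma sqrt_cast_le (x : ℕ) : ((Nat.sqrt x : ℝ)) ≤ Real.sqrt x := by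
  rw [Real.le_sqrt (by positivity) (by positivity)]
  have h := Nat.sqrt_le' x
  exact_mod_cast h

lemma le_sqrt_cast (x : ℕ) : Real.sqrt x ≤ (Nat.sqrt x : ℝ) + 1 := by
  have h := Nat.lt_succ_sqrt x
  have h2 : ((x:ℝ)) ≤ ((Nat.sqrt x : ℝ) + 1)^2 := by
    have hc : (x:ℝ) < ((Nat.sqrt x:ℝ)+1)*((Nat.sqrt x:ℝ)+1) := by exact_mod_cast h
    nlinarith
  calc Real.sqrt x ≤ Real.sqrt (((Nat.sqrt x : ℝ) + 1)^2) := Real.sqrt_le_sqrt h2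
    _ = (Nat.sqrt x : ℝ) + 1 := Real.sqrt_sq (by positivity)

set_option maxHeartbeats 1000000 in
lemma main_ev : ∀ᶠ x : ℕ in atTop,
    (x:ℝ)/16 ≤ Real.log (PP x) ∧ (nn x : ℝ) * Real.log (nn x) ≤ 16 * (x:ℝ)^2 := by
  filter_upwards [ev_log (1/10) (by norm_num), ev_log_sqrt (1/8) (by norm_num),
    eventually_ge_atTop 16] with x hlog10 hlog8 hx16
  have hx2 : 2 ≤ x := by omega
  have hxR : (16:ℝ) ≤ (x:ℝ) := by exact_mod_cast hx16
  have hx0 : (0:ℝ) ≤ (x:ℝ) := by linarith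
  obtain ⟨L, hLdef⟩ : ∃ L, Real.log (x:ℝ) = L := ⟨_, rfl⟩
  obtain ⟨K, hKdef⟩ : ∃ K, ((kk x : ℕ):ℝ) = K := ⟨_, rfl⟩
  obtain ⟨s, hsdef⟩ : ∃ s, Nat.sqrt x = s := ⟨_, rfl⟩
  obtain ⟨S, hSdef⟩ : ∃ S, Real.sqrt (x:ℝ) = S := ⟨_, rfl⟩
  obtain ⟨Ks, hKsdef⟩ : ∃ Ks, ((kk s : ℕ):ℝ) = Ks := ⟨_, rfl⟩
  obtain ⟨T, hTdef⟩ : ∃ T, Real.log ((PP x : ℕ):ℝ) = T := ⟨_, rfl⟩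
  obtain ⟨Ls, hLsdef⟩ : ∃ Ls, Real.log ((s:ℕ):ℝ) = Ls := ⟨_, rfl⟩
  have hL0 : 0 < L := by rw [← hLdef]; exact Real.log_pos (by exact_mod_cast (by omega : 1 < x))
  have hS0 : 0 < S := by rw [← hSdef]; exact Real.sqrt_pos.2 (by linarith)
  have hSS : S * S = (x:ℝ) := by rw [← hSdef]; exact Real.mul_self_sqrt hx0
  have hsle : (s:ℝ) ≤ S := by rw [← hSdef, ← hsdef]; exact sqrt_cast_le x
  have hsge : S ≤ (s:ℝ) + 1 := by rw [← hSdef, ← hsdef]; exact le_sqrt_cast x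
  have hs4 : 4 ≤ s := by rw [← hsdef]; exact Nat.le_sqrt.2 (by omega)
  have hs1R : (1:ℝ) ≤ (s:ℝ) := by exact_mod_cast (by omega : 1 ≤ s)
  have hK0 : 0 ≤ K := by rw [← hKdef]; exact Nat.cast_nonneg _
  have hlog4 : Real.log 4 = 2 * Real.log 2 := by
    rw [show (4:ℝ) = 2^2 by norm_num, Real.log_pow]; push_cast; ring
  have hl2lo := Real.log_two_gt_d9
  have hl2hi := Real.log_two_lt_d9
  -- step 1 : pi lower bound, giving x/2 <= K * L
  have h3R : ((x/2 : ℕ):ℝ) * Real.log 4 ≤ Real.log ((x:ℝ)+1) + K * L := by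
    have h3 := L3 hx2
    have hc : ((4:ℝ))^(x/2) ≤ ((x:ℝ)+1) * (x:ℝ)^(kk x) := by exact_mod_cast h3
    have hlog3 := Real.log_le_log (by positivity) hc
    rwa [Real.log_pow, Real.log_mul (by positivity) (by positivity), Real.log_pow,
      hLdef, hKdef] at hlog3
  have hhalf : ((x:ℝ) - 1)/2 ≤ ((x/2:ℕ):ℝ) := by
    have h5 : x ≤ 2*(x/2)+1 := by omega
    have h6 := (Nat.cast_le (α := ℝ)).2 h5
    push_cast at h6
    linarith
  have KL_low : (x:ℝ)/2 ≤ K * L := by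
    have e1 : ((x:ℝ)-1)/2 * Real.log 4 ≤ ((x/2:ℕ):ℝ) * Real.log 4 :=
      mul_le_mul_of_nonneg_right hhalf (by rw [hlog4]; linarith)
    rw [hlog4] at e1
    nlinarith [hlog10, mul_nonneg (by linarith : (0:ℝ) ≤ (x:ℝ) - 16)
      (by linarith : (0:ℝ) ≤ Real.log 2 - 0.6931)]
  -- step 2 : K >= 2S
  have hlogS : L ≤ S/8 := by
    have h11 := hlog8
    rw [hLdef, hSdef] at h11
    linarith
  have K_low : 2*S ≤ K := by
    by_contra hc
    push_neg at hc
    have e1 : K*L ≤ K*(S/8) := mul_le_mul_of_nonneg_left hlogS hK0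
    have e2 : K*(S/8) < 2*S*(S/8) := mul_lt_mul_of_pos_right hc (by linarith)
    nlinarith
  -- step 3 : log s bounds
  have hs0R : (0:ℝ) < (s:ℝ) := by linarith
  have hlogs_le : Ls ≤ L/2 := by
    have h7 := Real.log_le_log hs0R hsle
    rw [← hSdef] at h7
    rwa [Real.log_sqrt hx0, hLsdef, hLdef] at h7
  have hL16 : 4 * Real.log 2 ≤ L := by
    have h8 := Real.log_le_log (by norm_num : (0:ℝ) < 16) hxR
    rwa [show (16:ℝ) = 2^4 by norm_num, Real.log_pow, hLdef,
      show ((4:ℕ):ℝ) = 4 by norm_num] at h8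
  have hlogs_ge : L/4 ≤ Ls := by
    have h1 : S ≤ 2*(s:ℝ) := by linarith
    have h2 := Real.log_le_log hS0 h1
    rw [← hSdef] at h2
    rw [Real.log_sqrt hx0, Real.log_mul (by norm_num) (by linarith), hLdef, hLsdef] at h2
    linarith
  -- step 4 : theta lower bound
  have hkkmono : kk s ≤ kk x := by rw [← hsdef]; exact kk_mono (Nat.sqrt_le_self x)
  have h4R : (K - Ks) * Ls ≤ T := by
    have h4 : s ^ (kk x - kk s) ≤ PP x := by rw [← hsdef]; exact L4 (by omega : 1 ≤ x)
    have hc : ((s:ℝ))^(kk x - kk s) ≤ ((PP x : ℕ) : ℝ) := by exact_mod_cast h4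
    have hlog4' := Real.log_le_log (by positivity) hc
    rw [Real.log_pow, hTdef, hLsdef, Nat.cast_sub hkkmono, hKdef, hKsdef] at hlog4'
    exact hlog4'
  have hKs_le : Ks ≤ (s:ℝ) := by rw [← hKsdef]; exact_mod_cast kk_le s
  have hKKs : K/2 ≤ K - Ks := by linarith
  have hprod : (K/2) * (L/4) ≤ (K - Ks) * Ls :=
    mul_le_mul hKKs hlogs_ge (by linarith) (by linarith)
  have hq : (K/2) * (L/4) = (K*L)/8 := by ring
  rw [hq] at hprod
  have E1 : (x:ℝ)/16 ≤ T := by linarith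
  -- step 5 : K*L upper bound
  have hTup : T ≤ (x:ℝ) * Real.log 4 := by
    have h9 := Real.log_le_log (by exact_mod_cast PP_pos x : (0:ℝ) < ((PP x:ℕ):ℝ))
      (by exact_mod_cast PP_le_4_pow x : ((PP x:ℕ):ℝ) ≤ (4:ℝ)^x)
    rwa [Real.log_pow, hTdef] at h9
  have e3 : (K - Ks) * (L/4) ≤ (K - Ks) * Ls :=
    mul_le_mul_of_nonneg_left hlogs_ge (by linarith)
  have e4 : Ks * L ≤ (s:ℝ) * L := mul_le_mul_of_nonneg_right hKs_le (by linarith)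
  have e5 : (s:ℝ) * L ≤ S * L := mul_le_mul_of_nonneg_right hsle (by linarith)
  have e6 : S * L ≤ S * (S/8) := mul_le_mul_of_nonneg_left hlogS (by linarith)
  have hxl2 : (x:ℝ)*Real.log 2 ≤ (x:ℝ)*0.6931471808 :=
    mul_le_mul_of_nonneg_left (le_of_lt hl2hi) hx0
  rw [hlog4] at hTup
  have hr : (K - Ks) * (L/4) = (K*L)/4 - (Ks*L)/4 := by ring
  rw [hr] at e3
  have hr2 : S * (S/8) = (S*S)/8 := by ring
  rw [hr2, hSS] at e6
  have KL_up : K * L ≤ 6 * (x:ℝ) := by linarith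
  -- step 6 : nn bound
  have hnnx : ((nn x : ℕ) : ℝ) ≤ (x:ℝ) * K := by
    rw [← hKdef]; exact_mod_cast nn_le x
  have hnn2 : (2:ℝ) ≤ ((nn x : ℕ) : ℝ) := by exact_mod_cast nn_pos hx2
  have hlognn : Real.log ((nn x : ℕ):ℝ) ≤ 2*L := by
    have hle : nn x ≤ x*x := le_trans (nn_le x) (Nat.mul_le_mul_left x (kk_le x))
    have h10 := Real.log_le_log (by linarith : (0:ℝ) < ((nn x:ℕ):ℝ))
      (by exact_mod_cast hle : ((nn x:ℕ):ℝ) ≤ (x:ℝ)*(x:ℝ))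
    rw [show (x:ℝ)*(x:ℝ) = (x:ℝ)^2 by ring, Real.log_pow, hLdef] at h10
    push_cast at h10
    linarith
  have hlognn0 : 0 ≤ Real.log ((nn x:ℕ):ℝ) := Real.log_nonneg (by linarith)
  have E2 : ((nn x : ℕ) : ℝ) * Real.log ((nn x:ℕ):ℝ) ≤ 16 * (x:ℝ)^2 := by
    have f1 : ((nn x:ℕ):ℝ) * Real.log ((nn x:ℕ):ℝ) ≤ ((nn x:ℕ):ℝ) * (2*L) :=
      mul_le_mul_of_nonneg_left hlognn (by linarith)
    have f2 : ((nn x:ℕ):ℝ) * (2*L) ≤ ((x:ℝ)*K) * (2*L) :=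
      mul_le_mul_of_nonneg_right hnnx (by linarith)
    have f4 : 2*(x:ℝ)*(K*L) ≤ 2*(x:ℝ)*(6*(x:ℝ)) :=
      mul_le_mul_of_nonneg_left KL_up (by linarith)
    linarith [sq_nonneg (x:ℝ), f1, f2, f4]
  rw [← hTdef] at E1
  exact ⟨E1, E2⟩


lemma mod_succ_eq (m p : ℕ) : (m % p + 1) % p = (m + 1) % p := by
  conv_rhs => rw [Nat.add_mod]
  conv_lhs => rw [Nat.add_mod]
  rw [Nat.mod_mod_of_dvd _ dvd_rfl]


abbrev St (x : ℕ) : Type := (p : {q // q ∈ primesS x}) × Fin (p : ℕ)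

lemma card_St (x : ℕ) : Fintype.card (St x) = nn x := by
  rw [nn, Fintype.card_sigma]
  simp [← Finset.sum_coe_sort (primesS x) (fun p => p)]

def cycNFA (x : ℕ) : NFA (Fin 1) (St x) where
  step := fun s _ => {⟨s.1, ⟨(s.2.val + 1) % s.1.val, Nat.mod_lt _ s.2.pos⟩⟩}
  start := {s | s.2.val = 0}
  accept := {s | s.2.val ≠ 0}

lemma cyc_eval (x : ℕ) (w : List (Fin 1)) :
    (cycNFA x).eval w = {s | s.2.val = w.length % s.1.val} := by
  induction w using List.reverseRecOn with
  | nil =>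
    ext s
    simp [NFA.eval, NFA.evalFrom, cycNFA, Nat.zero_mod]
  | append_singleton w a ih =>
    rw [NFA.eval_append_singleton, ih]
    ext s
    rw [NFA.mem_stepSet]
    constructor
    · rintro ⟨t, ht, hs⟩
      simp only [cycNFA, Set.mem_singleton_iff] at hs
      subst hs
      simp only [Set.mem_setOf_eq] at ht ⊢
      rw [ht]
      simp only [List.length_append, List.length_singleton]
      exact mod_succ_eq _ _
    · intro hs
      refine ⟨⟨s.1, ⟨w.length % s.1.val, Nat.mod_lt _ s.2.pos⟩⟩, rfl, ?_⟩
      simp only [cycNFA, Set.mem_singleton_iff]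
      simp only [Set.mem_setOf_eq, List.length_append, List.length_singleton] at hs
      ext1
      · rfl
      · simp only []
        rw [Fin.heq_ext_iff rfl]
        rw [hs]
        exact (mod_succ_eq _ _).symm
    
lemma cyc_accepts (x m : ℕ) :
    (List.replicate m (0 : Fin 1)) ∈ (cycNFA x).accepts ↔ ∃ p ∈ primesS x, ¬ p ∣ m := by
  rw [NFA.mem_accepts]
  have : (cycNFA x).evalFrom (cycNFA x).start (List.replicate m (0:Fin 1))
      = {s | s.2.val = m % s.1.val} := by
    have := cyc_eval x (List.replicate m (0:Fin 1))
    simpa [NFA.eval] using this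
  rw [this]
  constructor
  · rintro ⟨s, hacc, hev⟩
    refine ⟨s.1, s.1.2, ?_⟩
    rw [Nat.dvd_iff_mod_eq_zero]
    simp only [Set.mem_setOf_eq] at hev hacc
    rw [← hev]; exact hacc
  · rintro ⟨p, hp, hdvd⟩
    have hpos : 0 < p := (Finset.mem_filter.1 hp).2.pos
    refine ⟨⟨⟨p, hp⟩, ⟨m % p, Nat.mod_lt _ hpos⟩⟩, ?_, rfl⟩
    simp only [cycNFA, Set.mem_setOf_eq]
    rw [Nat.dvd_iff_mod_eq_zero] at hdvd
    exact hdvd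

lemma cyc_accepts' (x m : ℕ) :
    (List.replicate m (0 : Fin 1)) ∈ (cycNFA x).accepts ↔ ¬ PP x ∣ m := by
  rw [cyc_accepts]
  constructor
  · rintro ⟨p, hp, hdvd⟩ hP
    exact hdvd ((Finset.dvd_prod_of_mem _ hp).trans hP)
  · intro hP
    by_contra h
    push_neg at h
    exact hP (Finset.prod_primes_dvd m
      (fun p hp => (Finset.mem_filter.1 hp).2.prime) h)

lemma parikh_mem (L : Language (Fin 1)) (m : ℕ) :
    (fun _ => m) ∈ parikhImage L ↔ List.replicate m (0:Fin 1) ∈ L := by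
  constructor
  · rintro ⟨w, hw, hp⟩
    have hcount : w.count (0 : Fin 1) = m := congrFun hp 0
    have hall : ∀ b ∈ w, (0 : Fin 1) = b := fun b _ => Subsingleton.elim _ _
    have hlen : w.length = m := by
      rw [← hcount, List.count_eq_length.2 hall]
    have : w = List.replicate m (0:Fin 1) := by
      rw [List.eq_replicate_iff]
      exact ⟨hlen, fun b hb => (hall b hb).symm⟩
    rwa [← this]
  · intro hm
    refine ⟨List.replicate m (0:Fin 1), hm, ?_⟩
    funext i
    have : i = 0 := Subsingleton.elim _ _
    subst this
    simp [parikh]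

lemma dfa_periodic {σ' : Type} [Fintype σ'] (B : DFA (Fin 1) σ') :
    ∃ i t : ℕ, 0 < t ∧ t ≤ Fintype.card σ' ∧
      ∀ m, i ≤ m → (List.replicate m (0:Fin 1) ∈ B.accepts ↔
        List.replicate (m + t) (0:Fin 1) ∈ B.accepts) := by
  set f : Fin (Fintype.card σ' + 1) → σ' :=
    fun m => B.evalFrom B.start (List.replicate m (0:Fin 1)) with hf
  obtain ⟨a, b, hab, hfab⟩ := Fintype.exists_ne_map_eq_of_card_lt f (by simp)
  wlog hlt : (a : ℕ) < (b : ℕ) generalizing a b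
  · exact this b a hab.symm hfab.symm (by have := Fin.val_ne_of_ne hab; omega)
  refine ⟨a, b - a, by omega, by omega, ?_⟩
  have key : ∀ k, B.evalFrom B.start (List.replicate ((a:ℕ) + k) (0:Fin 1))
      = B.evalFrom B.start (List.replicate ((b:ℕ) + k) (0:Fin 1)) := by
    intro k
    induction k with
    | zero => simpa using hfab
    | succ k ih =>
      rw [show (a:ℕ) + (k+1) = ((a:ℕ) + k) + 1 by ring,
        show (b:ℕ) + (k+1) = ((b:ℕ) + k) + 1 by ring,
        List.replicate_succ' (n := (a:ℕ)+k), List.replicate_succ' (n := (b:ℕ)+k),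
        DFA.evalFrom_append_singleton,
        DFA.evalFrom_append_singleton, ih]
  intro m hm
  have h1 := key (m - a)
  have h2 : (a:ℕ) + (m - a) = m := by omega
  have h3 : (b:ℕ) + (m - a) = m + (b - a) := by omega
  rw [h2, h3] at h1
  rw [DFA.mem_accepts, DFA.mem_accepts]
  unfold DFA.eval
  rw [h1]

lemma dfa_card_ge (P : ℕ) (hP : 0 < P) {σ' : Type} [Fintype σ'] (B : DFA (Fin 1) σ')
    (hacc : ∀ m, List.replicate m (0:Fin 1) ∈ B.accepts ↔ ¬ P ∣ m) :
    P ≤ Fintype.card σ' := by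
  obtain ⟨i, t, ht0, htc, hper⟩ := dfa_periodic B
  have hM : ¬ (List.replicate (P * (i+1)) (0:Fin 1) ∈ B.accepts) := by
    rw [hacc]; simp [Dvd.intro _ rfl]
  have hM' : ¬ (List.replicate (P * (i+1) + t) (0:Fin 1) ∈ B.accepts) := by
    rw [← hper _ (by nlinarith)]
    exact hM
  rw [hacc] at hM'
  push_neg at hM'
  have : P ∣ t := (Nat.dvd_add_right ⟨i+1, rfl⟩).1 hM'
  exact le_trans (Nat.le_of_dvd ht0 this) htc

end Stmt11

/-- There is a constant `c > 0` such that for infinitely many `n` there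
is an `n`-state NFA over a one-letter alphabet such that every DFA accepting a language
Parikh equivalent to its language has at least `e^{c·√(n·ln n)}` states; hence the
`e^{O(√(n·ln n))}` upper bound for converting NFAs into Parikh equivalent DFAs is tight. -/
theorem nfa_to_parikh_equivalent_dfa_lower_bound :
    ∃ c : ℝ, 0 < c ∧
      ∀ N : ℕ, ∃ n : ℕ, N ≤ n ∧
        ∃ (σ : Type) (_ : Fintype σ), Fintype.card σ = n ∧
          ∃ A : NFA (Fin 1) σ,
            ∀ (σ' : Type) (_ : Fintype σ') (B : DFA (Fin 1) σ'),
              parikhImage B.accepts = parikhImage A.accepts →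
              Real.exp (c * Real.sqrt (n * Real.log n)) ≤ (Fintype.card σ' : ℝ) := by
  obtain ⟨x₀, hx₀⟩ := Filter.eventually_atTop.1 Stmt11.main_ev
  refine ⟨1/64, by norm_num, fun N => ?_⟩
  obtain ⟨p, hpge, hp⟩ := Nat.exists_infinite_primes (max N x₀)
  have hx₀p : x₀ ≤ p := le_trans (le_max_right _ _) hpge
  have hNp : N ≤ p := le_trans (le_max_left _ _) hpge
  obtain ⟨hE1, hE2⟩ := hx₀ p hx₀p
  have hpx : p ∈ Stmt11.primesS p := Stmt11.mem_primesS.2 ⟨hp, le_rfl⟩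
  refine ⟨Stmt11.nn p, ?_, Stmt11.St p, inferInstance, Stmt11.card_St p, Stmt11.cycNFA p, ?_⟩
  · have h := Finset.single_le_sum (f := fun q => q) (fun q _ => Nat.zero_le q) hpx
    exact le_trans hNp h
  · intro σ' _ B hB
    have hacc : ∀ m, List.replicate m (0:Fin 1) ∈ B.accepts ↔ ¬ Stmt11.PP p ∣ m := by
      intro m
      rw [← Stmt11.parikh_mem, hB, Stmt11.parikh_mem, Stmt11.cyc_accepts']
    have hcard := Stmt11.dfa_card_ge (Stmt11.PP p) (Stmt11.PP_pos p) B hacc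
    have h1 : Real.sqrt ((Stmt11.nn p:ℝ) * Real.log (Stmt11.nn p)) ≤ 4*(p:ℝ) := by
      calc Real.sqrt ((Stmt11.nn p:ℝ) * Real.log (Stmt11.nn p))
          ≤ Real.sqrt (16*(p:ℝ)^2) := Real.sqrt_le_sqrt hE2
        _ = 4*(p:ℝ) := by
            rw [show (16:ℝ)*(p:ℝ)^2 = (4*(p:ℝ))^2 by ring]
            exact Real.sqrt_sq (by positivity)
    calc Real.exp (1/64 * Real.sqrt ((Stmt11.nn p:ℝ) * Real.log (Stmt11.nn p)))
        ≤ Real.exp ((p:ℝ)/16) := Real.exp_le_exp.2 (by linarith)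
      _ ≤ Real.exp (Real.log (Stmt11.PP p)) := Real.exp_le_exp.2 hE1
      _ = (Stmt11.PP p : ℝ) := Real.exp_log (by exact_mod_cast Stmt11.PP_pos p)
      _ ≤ (Fintype.card σ' : ℝ) := by exact_mod_cast hcard
end

section
/- For every integer h ≥ 3 there exists a context-free grammar in Chomsky normal form with exactly h variables over the two-letter terminal alphabet {a, b} whose generated language is exactly the singleton {(ab)^{2^{h−3}}}, i.e., the single word consisting of 2^{h−3} consecutive copies of ab. -/
/-- A context-free grammar is in Chomsky normal form if every production has one of the
forms `B → CD` (with `C, D` different from the start variable), `B → a`, or `S → ε`. -/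
def IsCNF {T : Type*} (G : ContextFreeGrammar T) : Prop :=
  ∀ r ∈ G.rules,
    (∃ a : T, r.output = [Symbol.terminal a]) ∨
    (∃ C D : G.NT, C ≠ G.initial ∧ D ≠ G.initial ∧
      r.output = [Symbol.nonterminal C, Symbol.nonterminal D]) ∨
    (r.input = G.initial ∧ r.output = [])

/-- The word `(ab)^H` over the two-letter alphabet `{a, b}` (identified with `Fin 2`,
with `a = 0` and `b = 1`): `H` consecutive copies of `ab`. -/
def abWord (H : ℕ) : List (Fin 2) :=
  (List.replicate H ([0, 1] : List (Fin 2))).flatten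

instance {T N : Type*} [DecidableEq T] [DecidableEq N] :
    DecidableEq (ContextFreeRule T N) := fun a b =>
  decidable_of_iff (a.input = b.input ∧ a.output = b.output)
    (by cases a; cases b; simp [ContextFreeRule.ext_iff])

universe uu

namespace CNFAux

lemma abWord_add (m l : ℕ) : abWord (m + l) = abWord m ++ abWord l := by
  unfold abWord
  rw [List.replicate_add, List.flatten_append]

lemma abWord_one : abWord 1 = [0, 1] := rfl

/-- Nonterminal type. -/
abbrev NTt (n : ℕ) : Type := ULift.{0} (Fin (n + 3))

/-- Shorthand for making a nonterminal. -/
abbrev nt (n : ℕ) (v : ℕ) (hv : v < n + 3) : NTt n := ⟨⟨v, hv⟩⟩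

/-- The list of rules. -/
def ruleList (n : ℕ) : List (ContextFreeRule (Fin 2) (NTt n)) :=
  ⟨nt n 0 (by omega), [Symbol.terminal 0]⟩ ::
  ⟨nt n 1 (by omega), [Symbol.terminal 1]⟩ ::
  ⟨nt n 2 (by omega),
    [Symbol.nonterminal (nt n 0 (by omega)), Symbol.nonterminal (nt n 1 (by omega))]⟩ ::
  (List.finRange n).map (fun k =>
    ⟨nt n (k.val + 3) (by omega),
      [Symbol.nonterminal (nt n (k.val + 2) (by omega)),
       Symbol.nonterminal (nt n (k.val + 2) (by omega))]⟩)

/-- The grammar. -/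
@[reducible]
def myG (n : ℕ) : ContextFreeGrammar (Fin 2) :=
  ⟨NTt n, nt n (n + 2) (by omega), (ruleList n).toFinset⟩

/-- Value of a symbol. -/
def symVal {n : ℕ} : Symbol (Fin 2) (NTt n) → List (Fin 2)
  | Symbol.terminal t => [t]
  | Symbol.nonterminal i =>
      if i.down.val = 0 then [0] else
      if i.down.val = 1 then [1] else abWord (2 ^ (i.down.val - 2))

def strVal {n : ℕ} (s : List (Symbol (Fin 2) (NTt n))) : List (Fin 2) :=
  (s.map symVal).flatten

lemma strVal_append {n : ℕ} (s t : List (Symbol (Fin 2) (NTt n))) :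
    strVal (s ++ t) = strVal s ++ strVal t := by
  simp [strVal]

lemma strVal_single {n : ℕ} (s : Symbol (Fin 2) (NTt n)) :
    strVal [s] = symVal s := by
  simp [strVal]

lemma strVal_terminal {n : ℕ} (w : List (Fin 2)) :
    strVal (n := n) (List.map Symbol.terminal w) = w := by
  induction w with
  | nil => rfl
  | cons a t iht => simpa [strVal, symVal] using iht

lemma nt_ne {n a b : ℕ} (ha : a < n + 3) (hb : b < n + 3) (hab : a ≠ b) :
    nt n a ha ≠ nt n b hb := by
  intro hEq
  exact hab (by simpa [nt] using congrArg (fun x => x.down.val) hEq)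

lemma rule_val {n : ℕ} {r : ContextFreeRule (Fin 2) (NTt n)} (hr : r ∈ ruleList n) :
    symVal (Symbol.nonterminal r.input) = strVal r.output := by
  simp only [ruleList, List.mem_cons, List.mem_map, List.mem_finRange] at hr
  rcases hr with rfl | rfl | rfl | ⟨k, -, rfl⟩
  · simp [symVal, strVal]
  · simp [symVal, strVal]
  · simp [symVal, strVal, abWord_one]
  · have h1 : (k.val + 3 : ℕ) ≠ 0 := by omega
    have h2 : (k.val + 3 : ℕ) ≠ 1 := by omega
    have h3 : (k.val + 2 : ℕ) ≠ 0 := by omega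
    have h4 : (k.val + 2 : ℕ) ≠ 1 := by omega
    have h5 : k.val + 3 - 2 = (k.val + 2 - 2) + 1 := by omega
    simp only [symVal, strVal, nt, List.map_cons, List.map_nil, List.flatten,
      List.append_nil, h1, h2, h3, h4, if_false]
    rw [h5, pow_succ, mul_two, abWord_add]
    simp [List.append_eq]

lemma strVal_invariant {n : ℕ} {u v : List (Symbol (Fin 2) (NTt n))}
    (huv : (myG n).Derives u v) : strVal u = strVal v := by
  induction huv with
  | refl => rfl
  | tail _ last ih =>
    rcases last with ⟨r, hrmem, hrw⟩
    rcases hrw.exists_parts with ⟨p, q, rfl, rfl⟩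
    rw [ih]
    have hr : r ∈ ruleList n := List.mem_toFinset.mp hrmem
    simp only [strVal_append]
    rw [strVal_single, rule_val hr]

lemma produces_of_rule {n : ℕ} {r : ContextFreeRule (Fin 2) (NTt n)}
    (hr : r ∈ ruleList n) :
    (myG n).Produces [Symbol.nonterminal r.input] r.output :=
  ⟨r, List.mem_toFinset.mpr hr, ContextFreeRule.Rewrites.input_output⟩

lemma derives_X {n : ℕ} (k : ℕ) (hk : k ≤ n) :
    (myG n).Derives [Symbol.nonterminal (nt n (k + 2) (by omega))]
      (List.map Symbol.terminal (abWord (2 ^ k))) := by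
  induction k with
  | zero =>
    have hA := produces_of_rule (n := n) (List.mem_cons_self)
    have hB := produces_of_rule (n := n)
      (List.mem_cons_of_mem _ (List.mem_cons_self))
    have hC := produces_of_rule (n := n)
      (List.mem_cons_of_mem _ (List.mem_cons_of_mem _ (List.mem_cons_self)))
    simp only [ruleList] at hA hB hC
    refine hC.trans_derives ?_
    rw [pow_zero, abWord_one]
    have step1 : (myG n).Produces
        [Symbol.nonterminal (nt n 0 (by omega)), Symbol.nonterminal (nt n 1 (by omega))]
        [Symbol.terminal 0, Symbol.nonterminal (nt n 1 (by omega))] := by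
      have := hA.append_right [Symbol.nonterminal (nt n 1 (by omega))]
      simpa using this
    have step2 : (myG n).Produces
        [Symbol.terminal 0, Symbol.nonterminal (nt n 1 (by omega))]
        [Symbol.terminal 0, Symbol.terminal 1] := by
      have := hB.append_left [Symbol.terminal (0 : Fin 2)]
      simpa using this
    exact (step1.trans_derives step2.single).trans (ContextFreeGrammar.Derives.refl _)
  | succ k ih =>
    have hk' : k ≤ n := by omega
    have hmem : (⟨nt n (k + 3) (by omega),
        [Symbol.nonterminal (nt n (k + 2) (by omega)),
         Symbol.nonterminal (nt n (k + 2) (by omega))]⟩ :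
        ContextFreeRule (Fin 2) (NTt n)) ∈ ruleList n := by
      simp only [ruleList, List.mem_cons, List.mem_map, List.mem_finRange]
      right; right; right
      exact ⟨⟨k, by omega⟩, trivial, rfl⟩
    have hP := produces_of_rule hmem
    refine hP.trans_derives ?_
    have ihd := ih hk'
    have d1 := ihd.append_right [Symbol.nonterminal (nt n (k + 2) (by omega))]
    have d2 := ihd.append_left (List.map Symbol.terminal (abWord (2 ^ k)))
    refine (d1.trans d2).trans ?_
    rw [pow_succ, mul_two, abWord_add, List.map_append]

theorem main (n : ℕ) : (myG n).language = {abWord (2 ^ n)} := by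
  ext w
  simp only [ContextFreeGrammar.mem_language_iff, Set.mem_singleton_iff]
  constructor
  · intro hw
    have := strVal_invariant hw
    have h1 : (n + 2 : ℕ) ≠ 0 := by omega
    have h2 : (n + 2 : ℕ) ≠ 1 := by omega
    rw [strVal_terminal, strVal_single] at this
    simp only [symVal, nt, h1, h2, if_false] at this
    exact this.symm
  · rintro rfl
    exact derives_X (n := n) n le_rfl

end CNFAux

/-- For every `h ≥ 3` there exists a CFG in Chomsky normal form with
exactly `h` variables over the two-letter alphabet `{a, b}` whose generated language is
exactly the singleton `{(ab)^{2^{h-3}}}`. -/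
theorem cnf_singleton_ab_power (h : ℕ) (hh : 3 ≤ h) :
    ∃ (G : ContextFreeGrammar (Fin 2)) (fG : Fintype G.NT),
      IsCNF G ∧
      @Fintype.card G.NT fG = h ∧
      G.language = {abWord (2 ^ (h - 3))} := by
  obtain ⟨n, rfl⟩ : ∃ n, h = n + 3 := ⟨h - 3, by omega⟩
  refine ⟨CNFAux.myG n, inferInstanceAs (Fintype (CNFAux.NTt n)), ?_, by simp, ?_⟩
  · intro r hr
    have hr' : r ∈ CNFAux.ruleList n := List.mem_toFinset.mp hr
    simp only [CNFAux.ruleList, List.mem_cons, List.mem_map, List.mem_finRange] at hr'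
    rcases hr' with rfl | rfl | rfl | ⟨k, -, rfl⟩
    · exact Or.inl ⟨0, rfl⟩
    · exact Or.inl ⟨1, rfl⟩
    · exact Or.inr (Or.inl ⟨_, _, CNFAux.nt_ne _ _ (by omega),
        CNFAux.nt_ne _ _ (by omega), rfl⟩)
    · exact Or.inr (Or.inl ⟨_, _, CNFAux.nt_ne _ _ (by omega),
        CNFAux.nt_ne _ _ (by omega), rfl⟩)
  · have := CNFAux.main n
    simpa using this
end

section
/- Let H ≥ 1 and consider the singleton language {(ab)^H} over the two-letter alphabet {a, b}, consisting of the single word of H consecutive copies of ab. Then every nondeterministic finite automaton (in particular, every deterministic finite automaton) accepting a language Parikh equivalent to {(ab)^H} has at least 2H+1 states. -/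
namespace NFAAux

variable {α : Type*} {σ : Type*} (A : NFA α σ)

lemma mem_evalFrom_iff (S : Set σ) (x : List α) (q : σ) :
    q ∈ A.evalFrom S x ↔ ∃ p ∈ S, q ∈ A.evalFrom {p} x := by
  induction x generalizing S with
  | nil => simp [NFA.evalFrom]
  | cons a x ih =>
    have h1 : ∀ T : Set σ, A.evalFrom T (a :: x) = A.evalFrom (A.stepSet T a) x := fun _ => rfl
    rw [h1, ih]
    constructor
    · rintro ⟨r, hr, hq⟩
      rw [NFA.mem_stepSet] at hr
      obtain ⟨p, hp, hstep⟩ := hr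
      refine ⟨p, hp, ?_⟩
      rw [h1, ih]
      exact ⟨r, by rw [NFA.mem_stepSet]; exact ⟨p, rfl, hstep⟩, hq⟩
    · rintro ⟨p, hp, hq⟩
      rw [h1, ih] at hq
      obtain ⟨r, hr, hq⟩ := hq
      rw [NFA.mem_stepSet] at hr
      obtain ⟨p', hp', hstep⟩ := hr
      cases hp'
      exact ⟨r, by rw [NFA.mem_stepSet]; exact ⟨p, hp, hstep⟩, hq⟩

lemma exists_run : ∀ (x : List α) (p q : σ), q ∈ A.evalFrom {p} x →
    ∃ f : ℕ → σ, f 0 = p ∧ f x.length = q ∧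
      ∀ i (h : i < x.length), f (i + 1) ∈ A.step (f i) x[i] := by
  intro x
  induction x with
  | nil =>
    intro p q hq
    have : q = p := by simpa [NFA.evalFrom] using hq
    subst this
    exact ⟨fun _ => q, rfl, rfl, by simp⟩
  | cons a x ih =>
    intro p q hq
    have h1 : A.evalFrom {p} (a :: x) = A.evalFrom (A.stepSet {p} a) x := rfl
    rw [h1, mem_evalFrom_iff] at hq
    obtain ⟨r, hr, hq⟩ := hq
    have hr' : r ∈ A.step p a := by
      rw [NFA.mem_stepSet] at hr
      obtain ⟨p', hp', h⟩ := hr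
      cases hp'; exact h
    obtain ⟨f, hf0, hfl, hstep⟩ := ih r q hq
    refine ⟨fun n => Nat.rec p (fun m _ => f m) n, rfl, by simpa using hfl, ?_⟩
    intro i hi
    cases i with
    | zero => simpa [hf0] using hr'
    | succ k =>
      have hk : k < x.length := by simpa using hi
      simpa using hstep k hk

lemma run_segment (x : List α) (f : ℕ → σ)
    (hstep : ∀ i (h : i < x.length), f (i + 1) ∈ A.step (f i) x[i]) :
    ∀ j i, i ≤ j → j ≤ x.length → f j ∈ A.evalFrom {f i} ((x.drop i).take (j - i)) := by
  intro j
  induction j with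
  | zero =>
    intro i h1 _
    have : i = 0 := Nat.le_zero.mp h1
    subst this
    simp [NFA.evalFrom]
  | succ j ih =>
    intro i h1 h2
    rcases Nat.eq_or_lt_of_le h1 with heq | hlt
    · rw [heq]; simp [NFA.evalFrom]
    · have hij : i ≤ j := by omega
      have hmem := ih i hij (by omega)
      have hjlen : j < x.length := by omega
      have hdlen : j - i < (x.drop i).length := by simp; omega
      have hget : (x.drop i)[j - i] = x[j] := by
        rw [List.getElem_drop]
        congr 1
        omega
      have htake : ((x.drop i).take (j + 1 - i)) = (x.drop i).take (j - i) ++ [x[j]] := by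
        have h3 : j + 1 - i = (j - i) + 1 := by omega
        rw [h3, ← List.take_concat_get hdlen]
        simp [hget]
      rw [htake, NFA.evalFrom_append, NFA.evalFrom_singleton, NFA.mem_stepSet]
      exact ⟨f j, hmem, hstep j hjlen⟩

lemma exists_short_accepted [Fintype σ] :
    ∀ (n : ℕ) (x : List α), x.length ≤ n → x ∈ A.accepts →
      ∃ y ∈ A.accepts, y.length < Fintype.card σ := by
  intro n
  induction n with
  | zero =>
    intro x hlen hx
    obtain ⟨q, _, _⟩ := id hx
    have hpos : 0 < Fintype.card σ := Fintype.card_pos_iff.mpr ⟨q⟩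
    exact ⟨x, hx, by omega⟩
  | succ n ih =>
    intro x hlen hx
    by_cases hshort : x.length < Fintype.card σ
    · exact ⟨x, hx, hshort⟩
    push_neg at hshort
    obtain ⟨q, hqacc, hq⟩ := hx
    rw [NFA.eval, mem_evalFrom_iff] at hq
    obtain ⟨p, hp, hq⟩ := hq
    obtain ⟨f, hf0, hfl, hstep⟩ := exists_run A x p q hq
    have hcard : Fintype.card σ < Fintype.card (Fin (x.length + 1)) := by simp; omega
    obtain ⟨i, j, hne, hfeq⟩ := Fintype.exists_ne_map_eq_of_card_lt
      (fun k : Fin (x.length + 1) => f k) hcard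
    wlog hij : (i : ℕ) < (j : ℕ) generalizing i j
    · exact this j i hne.symm hfeq.symm (by omega)
    set y : List α := x.take i ++ x.drop j with hy
    have hjle : (j : ℕ) ≤ x.length := by omega
    have hile : (i : ℕ) ≤ x.length := by omega
    have hylen : y.length = i + (x.length - j) := by
      simp [hy]
      omega
    have hfi : f i ∈ A.evalFrom {p} (x.take i) := by
      have := run_segment A x f hstep i 0 (by omega) hile
      simpa [hf0] using this
    have hfq : q ∈ A.evalFrom {f i} (x.drop j) := by
      have := run_segment A x f hstep x.length j hjle le_rfl
      rw [hfl] at this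
      have hfull : (x.drop j).take (x.length - j) = x.drop j := by
        apply List.take_of_length_le
        simp
      rw [hfull] at this
      rw [hfeq]
      exact this
    have hyacc : y ∈ A.accepts := by
      refine ⟨q, hqacc, ?_⟩
      rw [NFA.eval, mem_evalFrom_iff]
      refine ⟨p, hp, ?_⟩
      have happ : A.evalFrom {p} y = A.evalFrom (A.evalFrom {p} (x.take i)) (x.drop j) := by
        simp [hy, NFA.evalFrom, List.foldl_append]
      rw [happ, mem_evalFrom_iff]
      exact ⟨f i, hfi, hfq⟩
    exact ih y (by omega) hyacc

end NFAAux

lemma abWord_count0 (H : ℕ) : (abWord H).count 0 = H := by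
  induction H with
  | zero => rfl
  | succ n ih => simp [abWord, List.replicate_succ] at ih ⊢; omega

lemma abWord_count1 (H : ℕ) : (abWord H).count 1 = H := by
  induction H with
  | zero => rfl
  | succ n ih => simp [abWord, List.replicate_succ] at ih ⊢; omega

lemma fin2_length (x : List (Fin 2)) : x.length = x.count 0 + x.count 1 := by
  induction x with
  | nil => rfl
  | cons a x ih =>
    fin_cases a <;> simp [List.count_cons, ih] <;> omega

/-- For every `H ≥ 1`, every NFA accepting a language Parikh equivalent
to the singleton language `{(ab)^H}` has at least `2H + 1` states. -/
theorem nfa_parikh_equivalent_ab_power_lower_bound (H : ℕ) (hH : 1 ≤ H)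
    (σ : Type) [Fintype σ] (A : NFA (Fin 2) σ)
    (hPar : parikhImage A.accepts = parikhImage {abWord H}) :
    2 * H + 1 ≤ Fintype.card σ := by
  have hv : parikhImage ({abWord H} : Language (Fin 2)) = {parikh (abWord H)} := by
    ext v
    simp only [parikhImage, Set.mem_image, Set.mem_singleton_iff]
    constructor
    · rintro ⟨x, hx, rfl⟩
      rw [show x = abWord H from hx]
    · rintro rfl
      exact ⟨abWord H, rfl, rfl⟩
  have hlen_acc : ∀ x ∈ A.accepts, x.length = 2 * H := by
    intro x hx
    have hmem : parikh x ∈ parikhImage A.accepts := ⟨x, hx, rfl⟩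
    rw [hPar, hv, Set.mem_singleton_iff] at hmem
    have h0 : x.count 0 = H := by
      have := congrFun hmem 0
      simpa [parikh, abWord_count0] using this
    have h1 : x.count 1 = H := by
      have := congrFun hmem 1
      simpa [parikh, abWord_count1] using this
    rw [fin2_length x]
    omega
  have hne : ∃ x, x ∈ A.accepts := by
    have : parikh (abWord H) ∈ parikhImage A.accepts := by
      rw [hPar, hv]; simp
    obtain ⟨x, hx, -⟩ := this
    exact ⟨x, hx⟩
  by_contra hcon
  push_neg at hcon
  obtain ⟨x, hx⟩ := hne
  obtain ⟨y, hy, hylt⟩ := NFAAux.exists_short_accepted A x.length x le_rfl hx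
  have := hlen_acc y hy
  omega
end
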